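/- arXiv:1512.01657 — 5 statements merged into one kernel-verified Lean document; each statement's English description precedes it below -/
import Mathlib

section
/- Let n ≥ 1. The volume of the polar of the regular n-simplex with unit edge lengths centered at the origin equals volₙ(△ₙ°) = 2^{n/2} (n+1)^{n+1/2} / n! (that is, 2^{n/2} (n+1)ⁿ √(n+1) / n!). -/
open scoped BigOperators Pointwise RealInnerProductSpace
open MeasureTheory

noncomputable section

/-- The support-function "norm" `‖q‖_T = max_{p ∈ T} ⟨p, q⟩`. -/
def suppNorm {d : ℕ} (T : Set (EuclideanSpace ℝ (Fin d)))
    (q : EuclideanSpace ℝ (Fin d)) : ℝ :=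
  sSup ((fun p : EuclideanSpace ℝ (Fin d) => ⟪p, q⟫) '' T)

/-- Cyclic successor on `Fin m`. -/
def cyc {m : ℕ} (i : Fin m) : Fin m := ⟨(i.val + 1) % m, Nat.mod_lt _ i.pos⟩

/-- The `T`-length of the closed polygonal line through `q 0, …, q (m-1)`. -/
def polyLen {d : ℕ} (T : Set (EuclideanSpace ℝ (Fin d))) {m : ℕ}
    (q : Fin m → EuclideanSpace ℝ (Fin d)) : ℝ :=
  ∑ i : Fin m, suppNorm T (q (cyc i) - q i)

/-- `q` does not fit into a translate of the interior of `K`. -/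
def NotFit {d : ℕ} (K : Set (EuclideanSpace ℝ (Fin d))) {m : ℕ}
    (q : Fin m → EuclideanSpace ℝ (Fin d)) : Prop :=
  ∀ t : EuclideanSpace ℝ (Fin d), ¬ (∀ i, q i - t ∈ interior K)

/-- `ξ_T(K)`: the infimum of `T`-lengths of closed polygonal lines not fitting into a
translate of the interior of `K`. -/
def xi {d : ℕ} (T K : Set (EuclideanSpace ℝ (Fin d))) : ℝ :=
  sInf { L : ℝ | ∃ m : ℕ, 2 ≤ m ∧ ∃ q : Fin m → EuclideanSpace ℝ (Fin d),
    NotFit K q ∧ L = polyLen T q }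

/-- A convex body: compact, convex, with nonempty interior. -/
def IsConvexBody {d : ℕ} (K : Set (EuclideanSpace ℝ (Fin d))) : Prop :=
  IsCompact K ∧ Convex ℝ K ∧ (interior K).Nonempty

/-- The polar set `S° = {p : ⟨p, q⟩ ≤ 1 ∀ q ∈ S}`. -/
def polarSet {d : ℕ} (S : Set (EuclideanSpace ℝ (Fin d))) :
    Set (EuclideanSpace ℝ (Fin d)) :=
  { p | ∀ q ∈ S, ⟪p, q⟫ ≤ 1 }

/-- The permutohedron: the Minkowski sum of all edges of the simplex with vertices `v`. -/
def permutohedron {n : ℕ} (v : Fin (n + 1) → EuclideanSpace ℝ (Fin n)) :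
    Set (EuclideanSpace ℝ (Fin n)) :=
  ∑ p ∈ Finset.univ.filter (fun p : Fin (n + 1) × Fin (n + 1) => p.1 < p.2),
    segment ℝ (v p.1) (v p.2)

end

namespace SVol

open Finset Matrix
open scoped ENNReal

/-! ### Volume of the corner simplex in `Fin n → ℝ` -/

def DLT (n : ℕ) : Set (Fin n → ℝ) := {x | (∀ i, 0 ≤ x i) ∧ ∑ i, x i < 1}
def DLE (n : ℕ) : Set (Fin n → ℝ) := {x | (∀ i, 0 ≤ x i) ∧ ∑ i, x i ≤ 1}

lemma measurable_DLT (n : ℕ) : MeasurableSet (DLT n) := by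
  have : DLT n = (⋂ i, {x : Fin n → ℝ | 0 ≤ x i}) ∩ {x | ∑ i, x i < 1} := by
    ext x; simp [DLT, Set.mem_iInter]
  rw [this]
  exact (MeasurableSet.iInter fun i =>
      measurableSet_le measurable_const (measurable_pi_apply i)).inter
    (measurableSet_lt (Finset.measurable_sum _ fun i _ => measurable_pi_apply i)
      measurable_const)

lemma measurable_DLE (n : ℕ) : MeasurableSet (DLE n) := by
  have : DLE n = (⋂ i, {x : Fin n → ℝ | 0 ≤ x i}) ∩ {x | ∑ i, x i ≤ 1} := by
    ext x; simp [DLE, Set.mem_iInter]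
  rw [this]
  exact (MeasurableSet.iInter fun i =>
      measurableSet_le measurable_const (measurable_pi_apply i)).inter
    (measurableSet_le (Finset.measurable_sum _ fun i _ => measurable_pi_apply i)
      measurable_const)

lemma null_coord (n : ℕ) (i : Fin n) : volume {x : Fin n → ℝ | x i = 0} = 0 := by
  have h : {x : Fin n → ℝ | x i = 0}
      = (LinearMap.ker (LinearMap.proj (R := ℝ) (φ := fun _ : Fin n => ℝ) i) : Set _) := by
    ext x; simp [LinearMap.mem_ker]
  rw [h]
  refine Measure.addHaar_submodule _ _ (fun htop => ?_)
  have : Pi.single i (1:ℝ) ∈ LinearMap.ker (LinearMap.proj (R := ℝ) (φ := fun _ : Fin n => ℝ) i) := by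
    rw [htop]; trivial
  simp [LinearMap.mem_ker] at this

lemma null_sumone (n : ℕ) (hn : 1 ≤ n) : volume {x : Fin n → ℝ | ∑ i, x i = 1} = 0 := by
  haveI : NeZero n := ⟨by omega⟩
  set L : (Fin n → ℝ) →ₗ[ℝ] ℝ := ∑ i, LinearMap.proj i with hL
  have hLapp : ∀ x : Fin n → ℝ, L x = ∑ i, x i := by
    intro x; rw [hL]; simp [LinearMap.sum_apply]
  have hker : volume (LinearMap.ker L : Set (Fin n → ℝ)) = 0 := by
    refine Measure.addHaar_submodule _ _ (fun htop => ?_)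
    have : Pi.single (0 : Fin n) (1:ℝ) ∈ LinearMap.ker L := by rw [htop]; trivial
    rw [LinearMap.mem_ker, hLapp] at this
    simp [Finset.sum_pi_single] at this
  have h : {x : Fin n → ℝ | ∑ i, x i = 1}
      = (Pi.single (0 : Fin n) (1:ℝ) : Fin n → ℝ) +ᵥ (LinearMap.ker L : Set (Fin n → ℝ)) := by
    ext x
    constructor
    · intro hx
      refine ⟨x - Pi.single 0 1, ?_, ?_⟩
      · rw [SetLike.mem_coe, LinearMap.mem_ker, hLapp]
        have hx' : ∑ i, x i = 1 := hx
        simp [Finset.sum_sub_distrib, Finset.sum_pi_single, hx']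
      · simp [vadd_eq_add]
    · rintro ⟨y, hy, rfl⟩
      rw [SetLike.mem_coe, LinearMap.mem_ker, hLapp] at hy
      simp [vadd_eq_add, Finset.sum_add_distrib, hy, Finset.sum_pi_single]
  rw [h, measure_vadd, hker]

/-- sign value of a boolean -/
def sgn (ε : Bool) : ℝ := if ε then 1 else -1

lemma abs_sgn_mul (ε : Bool) (t : ℝ) : |sgn ε * t| = |t| := by
  cases ε <;> simp [sgn]

lemma vol_DLT (n : ℕ) :
    volume (DLT n) = ENNReal.ofReal (1 / n.factorial) := by
  classical
  have hB : volume {x : Fin n → ℝ | ∑ i, |x i| < 1}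
      = ENNReal.ofReal (2 ^ n / n.factorial) := by
    have h := MeasureTheory.volume_sum_rpow_lt_one (Fin n) (le_refl (1:ℝ))
    simp only [Real.rpow_one] at h
    rw [h]
    norm_num [Real.Gamma_two]
    rw [show ((n : ℝ) + 1) = ((n : ℕ) : ℝ) + 1 by norm_num, Real.Gamma_nat_eq_factorial]
  set T : (Fin n → Bool) → ((Fin n → ℝ) →ₗ[ℝ] (Fin n → ℝ)) :=
    fun ε => Matrix.toLin' (Matrix.diagonal (fun i => sgn (ε i))) with hT
  have hTapp : ∀ ε x i, T ε x i = sgn (ε i) * x i := by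
    intro ε x i
    rw [hT]
    simp [Matrix.toLin'_apply, Matrix.mulVec_diagonal]
  have hTdet : ∀ ε, LinearMap.det (T ε) = ∏ i, sgn (ε i) := by
    intro ε; rw [hT]; simp [LinearMap.det_toLin', Matrix.det_diagonal]
  have hTdetne : ∀ ε, LinearMap.det (T ε) ≠ 0 := by
    intro ε; rw [hTdet]
    exact Finset.prod_ne_zero_iff.2 fun i _ => by cases ε i <;> simp [sgn]
  have hTdetabs : ∀ ε, |LinearMap.det (T ε)| = 1 := by
    intro ε; rw [hTdet, Finset.abs_prod]
    exact Finset.prod_eq_one fun i _ => by cases ε i <;> simp [sgn]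
  set S : (Fin n → Bool) → Set (Fin n → ℝ) := fun ε => (T ε) ⁻¹' (DLT n) with hS
  have hvolS : ∀ ε, volume (S ε) = volume (DLT n) := by
    intro ε
    rw [hS]
    rw [Measure.addHaar_preimage_linearMap volume (hTdetne ε), abs_inv, hTdetabs ε]
    norm_num
  have hcover : {x : Fin n → ℝ | ∑ i, |x i| < 1} = ⋃ ε : Fin n → Bool, S ε := by
    ext x
    simp only [Set.mem_setOf_eq, Set.mem_iUnion, hS, Set.mem_preimage]
    constructor
    · intro hx
      refine ⟨fun i => decide (0 ≤ x i), ?_, ?_⟩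
      · intro i
        rw [hTapp]
        rcases le_or_gt 0 (x i) with h | h
        · simp [sgn, h]
        · simp [sgn, not_le.2 h]
          linarith
      · calc ∑ i, T _ x i = ∑ i, |x i| := by
              refine Finset.sum_congr rfl fun i _ => ?_
              rw [hTapp]
              rcases le_or_gt 0 (x i) with h | h
              · simp [sgn, h, abs_of_nonneg h]
              · simp [sgn, not_le.2 h, abs_of_neg h]
            _ < 1 := hx
    · rintro ⟨ε, h0, h1⟩
      have : ∀ i, T ε x i = |x i| := by
        intro i
        have := h0 i
        rw [hTapp] at this ⊢
        rw [← abs_sgn_mul (ε i) (x i)]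
        exact (abs_of_nonneg this).symm
      calc ∑ i, |x i| = ∑ i, T ε x i := by
            exact (Finset.sum_congr rfl fun i _ => (this i).symm)
        _ < 1 := h1
  have hdisj : Pairwise (Function.onFun (MeasureTheory.AEDisjoint volume) S) := by
    intro ε η hne
    obtain ⟨i, hi⟩ : ∃ i, ε i ≠ η i := by
      by_contra hc
      push_neg at hc
      exact hne (funext hc)
    refine measure_mono_null (fun x hx => ?_) (null_coord n i)
    obtain ⟨hx1, hx2⟩ := hx
    have h1 : 0 ≤ sgn (ε i) * x i := by have := hx1.1 i; rwa [hTapp] at this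
    have h2 : 0 ≤ sgn (η i) * x i := by have := hx2.1 i; rwa [hTapp] at this
    show x i = 0
    cases hε : ε i <;> cases hη : η i <;> rw [hε] at h1 <;> rw [hη] at h2 <;>
      simp [sgn] at h1 h2 <;> first | (exact absurd (hε ▸ hη ▸ rfl : ε i = η i) hi) | linarith
  have hmeasS : ∀ ε, NullMeasurableSet (S ε) volume := by
    intro ε
    exact (((measurable_DLT n).preimage
      (LinearMap.continuous_of_finiteDimensional (T ε)).measurable)).nullMeasurableSet
  have hsum : volume {x : Fin n → ℝ | ∑ i, |x i| < 1} = (2:ℝ≥0∞) ^ n * volume (DLT n) := by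
    rw [hcover, measure_iUnion₀ hdisj hmeasS, tsum_fintype]
    rw [Finset.sum_congr rfl fun ε _ => hvolS ε]
    simp [Finset.card_univ]
  rw [hB] at hsum
  have h2n : ((2:ℝ≥0∞) ^ n) ≠ 0 := by positivity
  have h2nt : ((2:ℝ≥0∞) ^ n) ≠ ⊤ := ENNReal.pow_ne_top (by norm_num)
  have : volume (DLT n) = ((2:ℝ≥0∞) ^ n)⁻¹ * ENNReal.ofReal (2 ^ n / n.factorial) := by
    rw [hsum, ← mul_assoc, ENNReal.inv_mul_cancel h2n h2nt, one_mul]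
  rw [this]
  rw [show (2:ℝ) ^ n / n.factorial = 2 ^ n * (1 / n.factorial) by ring]
  rw [ENNReal.ofReal_mul (by positivity)]
  rw [← mul_assoc]
  rw [show ENNReal.ofReal ((2:ℝ)^n) = (2:ℝ≥0∞)^n by
    rw [ENNReal.ofReal_pow (by norm_num)]; norm_num]
  rw [ENNReal.inv_mul_cancel h2n h2nt, one_mul]

lemma vol_DLE (n : ℕ) (hn : 1 ≤ n) :
    volume (DLE n) = ENNReal.ofReal (1 / n.factorial) := by
  have hsplit : DLE n = DLT n ∪ (DLE n ∩ {x | ∑ i, x i = 1}) := by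
    ext x
    constructor
    · rintro ⟨h0, h1⟩
      rcases lt_or_eq_of_le h1 with h | h
      · exact Or.inl ⟨h0, h⟩
      · exact Or.inr ⟨⟨h0, h1⟩, h⟩
    · rintro (⟨h0, h1⟩ | ⟨hx, _⟩)
      · exact ⟨h0, le_of_lt h1⟩
      · exact hx
  have h0 : volume (DLE n ∩ {x | ∑ i, x i = 1}) = 0 :=
    measure_mono_null Set.inter_subset_right (null_sumone n hn)
  rw [hsplit]
  apply le_antisymm
  · calc volume (DLT n ∪ DLE n ∩ {x | ∑ i, x i = 1})
        ≤ volume (DLT n) + volume (DLE n ∩ {x | ∑ i, x i = 1}) := measure_union_le _ _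
      _ = ENNReal.ofReal (1 / n.factorial) := by rw [h0, vol_DLT n, add_zero]
  · rw [← vol_DLT n]
    exact measure_mono Set.subset_union_left

/-- the closed corner simplex in Euclidean space -/
def DE (n : ℕ) : Set (EuclideanSpace ℝ (Fin n)) := {x | (∀ i, 0 ≤ x i) ∧ ∑ i, x i ≤ 1}

lemma vol_DE (n : ℕ) (hn : 1 ≤ n) :
    volume (DE n) = ENNReal.ofReal (1 / n.factorial) := by
  have hmp := EuclideanSpace.volume_preserving_symm_measurableEquiv_toLp (Fin n)
  have hpre : DE n = (MeasurableEquiv.toLp 2 (Fin n → ℝ)).symm ⁻¹' (DLE n) := rfl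
  rw [hpre, MeasurePreserving.measure_preimage hmp (measurable_DLE n).nullMeasurableSet]
  exact vol_DLE n hn

lemma convex_DE (n : ℕ) : Convex ℝ (DE n) := by
  intro x hx y hy a b ha hb hab
  constructor
  · intro i
    have : (a • x + b • y) i = a * x i + b * y i := rfl
    rw [this]
    exact add_nonneg (mul_nonneg ha (hx.1 i)) (mul_nonneg hb (hy.1 i))
  · have : ∀ i, (a • x + b • y) i = a * x i + b * y i := fun _ => rfl
    calc ∑ i, (a • x + b • y) i = ∑ i, (a * x i + b * y i) :=
          Finset.sum_congr rfl fun i _ => this i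
      _ = a * ∑ i, x i + b * ∑ i, y i := by
          rw [Finset.sum_add_distrib, Finset.mul_sum, Finset.mul_sum]
      _ ≤ a * 1 + b * 1 := by
          gcongr
          · exact hx.2
          · exact hy.2
      _ = 1 := by rw [mul_one, mul_one, hab]

/-! ### Geometry of the regular simplex -/

variable {n : ℕ}

lemma inner_vv (v : Fin (n + 1) → EuclideanSpace ℝ (Fin n))
    (hsum : ∑ i, v i = 0) (hedge : ∀ i j, i ≠ j → ‖v i - v j‖ = 1) :
    ∀ i j, ⟪v i, v j⟫ =
      if i = j then (n : ℝ) / (2 * (n + 1)) else -(1 / (2 * ((n : ℝ) + 1))) := by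
  have hb : ∀ i j, i ≠ j → ⟪v i, v j⟫ = (‖v i‖ ^ 2 + ‖v j‖ ^ 2 - 1) / 2 := by
    intro i j hij
    have h2 : ‖v i - v j‖ ^ 2 = 1 := by rw [hedge i j hij]; norm_num
    rw [norm_sub_sq_real] at h2
    linarith
  have hz : ∀ i, ∑ j, ⟪v i, v j⟫ = 0 := by
    intro i
    rw [← inner_sum, hsum, inner_zero_right]
  set B : ℝ := ∑ j, ‖v j‖ ^ 2 with hB
  have key : ∀ i, ((n : ℝ) + 1) * ‖v i‖ ^ 2 = n - B := by
    intro i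
    have h0 := hz i
    rw [← Finset.add_sum_erase _ _ (Finset.mem_univ i)] at h0
    rw [real_inner_self_eq_norm_sq] at h0
    have hrest : ∑ j ∈ univ.erase i, ⟪v i, v j⟫
        = ∑ j ∈ univ.erase i, ((‖v i‖ ^ 2 - 1) / 2 + ‖v j‖ ^ 2 / 2) := by
      refine Finset.sum_congr rfl fun j hj => ?_
      rw [hb i j (Ne.symm (Finset.ne_of_mem_erase hj))]
      ring
    rw [hrest, Finset.sum_add_distrib, Finset.sum_const] at h0
    have hcard : (univ.erase i).card = n := by
      rw [Finset.card_erase_of_mem (Finset.mem_univ i), Finset.card_univ]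
      simp
    have hsB : ∑ j ∈ univ.erase i, ‖v j‖ ^ 2 / 2 = (B - ‖v i‖ ^ 2) / 2 := by
      rw [← Finset.sum_div, Finset.sum_erase_eq_sub (Finset.mem_univ i)]
    rw [hcard, hsB, nsmul_eq_mul] at h0
    have hn' : (0 : ℝ) ≤ n := Nat.cast_nonneg n
    linarith
  have hBval : B = n / 2 := by
    have h := Finset.sum_congr rfl (fun i (_ : i ∈ (univ : Finset (Fin (n+1)))) => key i)
    rw [← Finset.mul_sum, ← hB, Finset.sum_const, Finset.card_univ, Fintype.card_fin,
      nsmul_eq_mul] at h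
    push_cast at h
    have hn1 : (0 : ℝ) < n + 1 := by positivity
    nlinarith
  have hbi : ∀ i, ‖v i‖ ^ 2 = (n : ℝ) / (2 * (n + 1)) := by
    intro i
    have := key i
    rw [hBval] at this
    have hn1 : ((n : ℝ) + 1) ≠ 0 := by positivity
    field_simp at this ⊢
    linarith
  intro i j
  by_cases hij : i = j
  · subst hij
    rw [if_pos rfl, real_inner_self_eq_norm_sq, hbi]
  · rw [if_neg hij, hb i j hij, hbi, hbi]
    have hn1 : ((n : ℝ) + 1) ≠ 0 := by positivity
    field_simp
    ring

lemma inner_uu (v : Fin (n + 1) → EuclideanSpace ℝ (Fin n))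
    (hsum : ∑ i, v i = 0) (hedge : ∀ i j, i ≠ j → ‖v i - v j‖ = 1) :
    ∀ i j : Fin n, ⟪v i.succ - v 0, v j.succ - v 0⟫ = if i = j then (1 : ℝ) else 1 / 2 := by
  have hvv := inner_vv v hsum hedge
  intro i j
  have hn1 : ((n : ℝ) + 1) ≠ 0 := by positivity
  simp only [inner_sub_left, inner_sub_right]
  rw [hvv i.succ j.succ, hvv i.succ 0, hvv 0 j.succ, hvv 0 0]
  rw [if_pos rfl, if_neg (Fin.succ_ne_zero i), if_neg (Ne.symm (Fin.succ_ne_zero j))]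
  by_cases hij : i = j
  · subst hij
    rw [if_pos rfl, if_pos rfl]
    field_simp
    ring
  · rw [if_neg (fun h => hij (Fin.succ_inj.mp h)), if_neg hij]
    field_simp
    ring

lemma span_v (v : Fin (n + 1) → EuclideanSpace ℝ (Fin n))
    (hsum : ∑ i, v i = 0) (hedge : ∀ i j, i ≠ j → ‖v i - v j‖ = 1) (hn : 1 ≤ n) :
    Submodule.span ℝ (Set.range v) = ⊤ := by
  set u : Fin n → EuclideanSpace ℝ (Fin n) := fun i => v i.succ - v 0 with hu
  have huu : ∀ i j, ⟪u i, u j⟫ = if i = j then (1 : ℝ) else 1 / 2 :=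
    inner_uu v hsum hedge
  have hindep : LinearIndependent ℝ u := by
    rw [Fintype.linearIndependent_iff]
    intro g hg
    set Tg : ℝ := ∑ i, g i with hTg
    have hj : ∀ j, g j = -Tg := by
      intro j
      have h0 : ⟪∑ i, g i • u i, u j⟫ = (0 : ℝ) := by rw [hg, inner_zero_left]
      rw [sum_inner] at h0
      have h1 : ∀ i, ⟪g i • u i, u j⟫ = g i * (if i = j then (1:ℝ) else 1/2) := by
        intro i
        rw [real_inner_smul_left, huu i j]
      rw [Finset.sum_congr rfl fun i _ => h1 i] at h0
      have h2 : ∀ i, g i * (if i = j then (1:ℝ) else 1/2)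
          = g i / 2 + (if i = j then g i / 2 else 0) := by
        intro i
        by_cases h : i = j <;> simp [h] <;> ring
      rw [Finset.sum_congr rfl fun i _ => h2 i, Finset.sum_add_distrib,
        Finset.sum_ite_eq' univ j (fun i => g i / 2), if_pos (Finset.mem_univ j),
        ← Finset.sum_div] at h0
      rw [← hTg] at h0
      linarith
    have hT0 : Tg = 0 := by
      have : Tg = ∑ i : Fin n, (-Tg) := by
        rw [hTg]
        exact Finset.sum_congr rfl fun i _ => hj i
      rw [Finset.sum_const, Finset.card_univ, Fintype.card_fin, nsmul_eq_mul] at this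
      have hn' : (0 : ℝ) ≤ n := Nat.cast_nonneg n
      nlinarith
    intro i
    rw [hj i, hT0, neg_zero]
  haveI : Nonempty (Fin n) := ⟨⟨0, by omega⟩⟩
  have hspanu : Submodule.span ℝ (Set.range u) = ⊤ :=
    LinearIndependent.span_eq_top_of_card_eq_finrank hindep
      (by simp [finrank_euclideanSpace_fin])
  rw [eq_top_iff, ← hspanu]
  apply Submodule.span_le.2
  rintro x ⟨i, rfl⟩
  exact sub_mem (Submodule.subset_span ⟨i.succ, rfl⟩) (Submodule.subset_span ⟨0, rfl⟩)

/-! ### The polar body is a rescaled simplex -/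

lemma mem_polar_hull_iff (v : Fin (n + 1) → EuclideanSpace ℝ (Fin n))
    (p : EuclideanSpace ℝ (Fin n)) :
    p ∈ polarSet (convexHull ℝ (Set.range v)) ↔ ∀ i, ⟪p, v i⟫ ≤ 1 := by
  constructor
  · intro h i
    exact h (v i) (subset_convexHull ℝ _ ⟨i, rfl⟩)
  · intro h q hq
    have hcvx : Convex ℝ {q : EuclideanSpace ℝ (Fin n) | ⟪p, q⟫ ≤ 1} := by
      apply convex_halfSpace_le
      exact ⟨fun a b => inner_add_right p a b, fun c a => real_inner_smul_right p a c⟩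
    have : convexHull ℝ (Set.range v) ⊆ {q | ⟪p, q⟫ ≤ 1} := by
      apply convexHull_min _ hcvx
      rintro x ⟨i, rfl⟩
      exact h i
    exact this hq

lemma polar_convex (S : Set (EuclideanSpace ℝ (Fin n))) : Convex ℝ (polarSet S) := by
  intro x hx y hy a b ha hb hab
  intro q hq
  have : ⟪a • x + b • y, q⟫ = a * ⟪x, q⟫ + b * ⟪y, q⟫ := by
    rw [inner_add_left, real_inner_smul_left, real_inner_smul_left]
  rw [this]
  calc a * ⟪x, q⟫ + b * ⟪y, q⟫ ≤ a * 1 + b * 1 := by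
        gcongr
        · exact hx q hq
        · exact hy q hq
    _ = 1 := by rw [mul_one, mul_one, hab]

theorem polar_eq_hull (v : Fin (n + 1) → EuclideanSpace ℝ (Fin n))
    (hsum : ∑ i, v i = 0) (hedge : ∀ i j, i ≠ j → ‖v i - v j‖ = 1) (hn : 1 ≤ n) :
    polarSet (convexHull ℝ (Set.range v))
      = convexHull ℝ (Set.range (fun k => (-(2 * ((n : ℝ) + 1))) • v k)) := by
  have hvv := inner_vv v hsum hedge
  have hn1 : ((n : ℝ) + 1) ≠ 0 := by positivity
  set w : Fin (n + 1) → EuclideanSpace ℝ (Fin n) :=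
    fun k => (-(2 * ((n : ℝ) + 1))) • v k with hw
  have hwv : ∀ j i, ⟪w j, v i⟫ = if j = i then -(n : ℝ) else 1 := by
    intro j i
    rw [hw]
    simp only [real_inner_smul_left]
    rw [hvv j i]
    by_cases h : j = i
    · rw [if_pos h, if_pos h]
      field_simp
    · rw [if_neg h, if_neg h]
      field_simp
  apply Set.Subset.antisymm
  · intro p hp
    rw [mem_polar_hull_iff] at hp
    set a : Fin (n + 1) → ℝ := fun j => (1 - ⟪p, v j⟫) / ((n : ℝ) + 1) with ha
    have ha0 : ∀ j, 0 ≤ a j := by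
      intro j
      apply div_nonneg
      · linarith [hp j]
      · positivity
    have hinnersum : ∑ j, ⟪p, v j⟫ = 0 := by rw [← inner_sum, hsum, inner_zero_right]
    have ha1 : ∑ j, a j = 1 := by
      rw [ha]
      simp only
      rw [← Finset.sum_div, Finset.sum_sub_distrib, hinnersum, Finset.sum_const,
        Finset.card_univ, Fintype.card_fin, nsmul_eq_mul, mul_one, sub_zero]
      field_simp
      push_cast
      rfl
    have hpa : p = ∑ j, a j • w j := by
      have horth : ∀ i, ⟪p - ∑ j, a j • w j, v i⟫ = 0 := by
        intro i
        rw [inner_sub_left, sum_inner]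
        have h1 : ∀ j, ⟪a j • w j, v i⟫ = a j * (if j = i then -(n:ℝ) else 1) := by
          intro j
          rw [real_inner_smul_left, hwv j i]
        rw [Finset.sum_congr rfl fun j _ => h1 j]
        have h2 : ∀ j, a j * (if j = i then -(n:ℝ) else 1)
            = a j + (if j = i then -a j * ((n:ℝ) + 1) else 0) := by
          intro j
          by_cases h : j = i <;> simp [h] <;> ring
        rw [Finset.sum_congr rfl fun j _ => h2 j, Finset.sum_add_distrib,
          Finset.sum_ite_eq' univ i (fun j => -a j * ((n:ℝ)+1)), if_pos (Finset.mem_univ i), ha1]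
        have hai : a i * ((n:ℝ) + 1) = 1 - ⟪p, v i⟫ := by
          rw [ha]
          field_simp
        nlinarith [hai]
      set r := p - ∑ j, a j • w j with hr
      have hrmem : r ∈ Submodule.span ℝ (Set.range v) := by
        rw [span_v v hsum hedge hn]
        trivial
      have hall : ∀ x ∈ Submodule.span ℝ (Set.range v), ⟪r, x⟫ = (0:ℝ) := by
        intro x hx
        refine Submodule.span_induction
          (p := fun x _ => ⟪r, x⟫ = (0:ℝ)) ?_ ?_ ?_ ?_ hx
        · rintro x' ⟨i, rfl⟩
          exact horth i
        · exact inner_zero_right r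
        · intro x' y' _ _ hx' hy'
          rw [inner_add_right, hx', hy', add_zero]
        · intro c x' _ hx'
          rw [real_inner_smul_right, hx', mul_zero]
      have hrr : ⟪r, r⟫ = (0:ℝ) := hall r hrmem
      have : r = 0 := by
        rwa [inner_self_eq_zero] at hrr
      rw [← sub_eq_zero]
      exact this
    rw [hpa]
    exact (convex_convexHull ℝ _).sum_mem (fun j _ => ha0 j) ha1
      (fun j _ => subset_convexHull ℝ _ ⟨j, rfl⟩)
  · apply convexHull_min _ (polar_convex _)
    rintro x ⟨j, rfl⟩
    rw [mem_polar_hull_iff]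
    intro i
    rw [hwv j i]
    by_cases h : j = i
    · rw [if_pos h]
      have : (0:ℝ) ≤ n := Nat.cast_nonneg n
      linarith
    · rw [if_neg h]

/-! ### The simplex as affine image of the corner simplex -/

noncomputable def uw (w : Fin (n + 1) → EuclideanSpace ℝ (Fin n)) (i : Fin n) :
    EuclideanSpace ℝ (Fin n) := w i.succ - w 0

noncomputable def Umat (w : Fin (n + 1) → EuclideanSpace ℝ (Fin n)) :
    Matrix (Fin n) (Fin n) ℝ := Matrix.of fun j i => uw w i j

lemma L_apply (w : Fin (n + 1) → EuclideanSpace ℝ (Fin n)) (x : EuclideanSpace ℝ (Fin n)) :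
    Matrix.toEuclideanLin (Umat w) x = ∑ i, x i • uw w i := by
  ext j
  have h1 : (Matrix.toEuclideanLin (Umat w) x) j = ∑ i, uw w i j * x i := rfl
  have h2 : (∑ i, x i • uw w i) j = ∑ i, x i * uw w i j := by
    rw [WithLp.ofLp_sum, Finset.sum_apply j Finset.univ fun i => x i • uw w i]
    rfl
  rw [h1, h2]
  exact Finset.sum_congr rfl fun i _ => mul_comm _ _

lemma hull_w_eq (w : Fin (n + 1) → EuclideanSpace ℝ (Fin n)) :
    convexHull ℝ (Set.range w)
      = w 0 +ᵥ (⇑(Matrix.toEuclideanLin (Umat w)) '' DE n) := by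
  set L := Matrix.toEuclideanLin (Umat w) with hL
  apply Set.Subset.antisymm
  · apply convexHull_min
    · rintro x ⟨k, rfl⟩
      induction k using Fin.cases with
      | zero =>
        refine Set.mem_vadd_set.2 ⟨L 0, ⟨0, ⟨fun i => le_refl 0, ?_⟩, rfl⟩, ?_⟩
        · simp
        · rw [map_zero]
          simp
      | succ i =>
        refine Set.mem_vadd_set.2 ⟨L (EuclideanSpace.single i 1), ⟨_, ⟨?_, ?_⟩, rfl⟩, ?_⟩
        · intro j
          rw [EuclideanSpace.single_apply]
          positivity
        · have : ∀ j, (EuclideanSpace.single i (1:ℝ)) j = if j = i then 1 else 0 :=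
            fun j => EuclideanSpace.single_apply i 1 j
          rw [Finset.sum_congr rfl fun j _ => this j,
            Finset.sum_ite_eq' Finset.univ i fun _ => (1:ℝ)]
          simp
        · rw [hL, L_apply]
          have : ∑ j, (EuclideanSpace.single i (1:ℝ)) j • uw w j = uw w i := by
            have h : ∀ j, (EuclideanSpace.single i (1:ℝ)) j • uw w j
                = if j = i then uw w j else 0 := by
              intro j
              rw [EuclideanSpace.single_apply]
              by_cases h : j = i <;> simp [h]
            rw [Finset.sum_congr rfl fun j _ => h j,
              Finset.sum_ite_eq' Finset.univ i fun j => uw w j,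
              if_pos (Finset.mem_univ i)]
          rw [this, uw]
          simp [vadd_eq_add]
    · exact ((convex_DE n).linear_image L).vadd (w 0)
  · rintro z ⟨y, ⟨x, hx, rfl⟩, rfl⟩
    have key : w 0 +ᵥ L x = ∑ k, (Fin.cons (1 - ∑ i, x i) x : Fin (n+1) → ℝ) k • w k := by
      rw [Fin.sum_univ_succ]
      simp only [Fin.cons_zero, Fin.cons_succ]
      have : ∀ i : Fin n, x i • w i.succ = x i • uw w i + x i • w 0 := by
        intro i
        rw [uw, smul_sub]
        abel
      rw [Finset.sum_congr rfl fun i _ => this i, Finset.sum_add_distrib, ← Finset.sum_smul,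
        sub_smul, one_smul, hL, L_apply]
      rw [vadd_eq_add]
      abel
    show w 0 +ᵥ L x ∈ convexHull ℝ (Set.range w)
    rw [key]
    refine (convex_convexHull ℝ _).sum_mem ?_ ?_ (fun k _ => subset_convexHull ℝ _ ⟨k, rfl⟩)
    · intro k _
      induction k using Fin.cases with
      | zero =>
        rw [Fin.cons_zero]
        have := hx.2
        linarith
      | succ i =>
        rw [Fin.cons_succ]
        exact hx.1 i
    · rw [Fin.sum_univ_succ]
      simp only [Fin.cons_zero, Fin.cons_succ]
      ring

/-! ### The determinant -/

open Matrix in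
lemma det_L (w : Fin (n + 1) → EuclideanSpace ℝ (Fin n))
    (hg : ∀ i j, ⟪uw w i, uw w j⟫ =
      if i = j then 4 * ((n : ℝ) + 1) ^ 2 else 2 * ((n : ℝ) + 1) ^ 2) :
    |LinearMap.det (Matrix.toEuclideanLin (Umat w))|
      = Real.sqrt 2 ^ n * ((n : ℝ) + 1) ^ n * Real.sqrt ((n : ℝ) + 1) := by
  have hdet : LinearMap.det (Matrix.toEuclideanLin (Umat w)) = (Umat w).det := by
    rw [Matrix.toEuclideanLin_eq_toLin]
    exact LinearMap.det_toLin _ _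
  have hinner : ∀ i j, ⟪uw w i, uw w j⟫ = ∑ k, uw w i k * uw w j k := by
    intro i j
    rw [PiLp.inner_apply]
    simp [RCLike.inner_apply, conj_trivial]
    exact Finset.sum_congr rfl fun _ _ => mul_comm _ _
  have hUtU : (Umat w)ᵀ * (Umat w)
      = (2 * ((n : ℝ) + 1) ^ 2) •
        ((1 : Matrix (Fin n) (Fin n) ℝ)
          + Matrix.replicateCol Unit (fun _ => (1:ℝ)) * Matrix.replicateRow Unit (fun _ => (1:ℝ))) := by
    ext i j
    have hl : ((Umat w)ᵀ * (Umat w)) i j = ∑ k, uw w i k * uw w j k := by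
      rw [Matrix.mul_apply]
      exact Finset.sum_congr rfl fun k _ => rfl
    have hcolrow : (Matrix.replicateCol Unit (fun _ => (1:ℝ)) * Matrix.replicateRow Unit (fun _ => (1:ℝ))) i j
        = 1 := by
      rw [Matrix.mul_apply]
      simp
    rw [hl, ← hinner i j, hg i j, Matrix.smul_apply, Matrix.add_apply, hcolrow,
      Matrix.one_apply]
    by_cases h : i = j
    · rw [if_pos h, if_pos h]
      simp
      ring
    · rw [if_neg h, if_neg h]
      simp
  have hdetsq : (Umat w).det ^ 2 = (2 * ((n : ℝ) + 1) ^ 2) ^ n * ((n : ℝ) + 1) := by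
    have h1 : (Umat w).det ^ 2 = ((Umat w)ᵀ * (Umat w)).det := by
      rw [Matrix.det_mul, Matrix.det_transpose]
      ring
    rw [h1, hUtU, Matrix.det_smul, Matrix.det_one_add_replicateCol_mul_replicateRow]
    have : (fun _ : Fin n => (1:ℝ)) ⬝ᵥ (fun _ => (1:ℝ)) = (n : ℝ) := by
      simp [dotProduct]
    rw [this, Fintype.card_fin]
    ring
  have habs : |LinearMap.det (Matrix.toEuclideanLin (Umat w))|
      = Real.sqrt ((Umat w).det ^ 2) := by
    rw [hdet, Real.sqrt_sq_eq_abs]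
  rw [habs, hdetsq]
  have h2 : Real.sqrt 2 ^ 2 = 2 := Real.sq_sqrt (by norm_num)
  have hn1 : Real.sqrt ((n : ℝ) + 1) ^ 2 = (n : ℝ) + 1 :=
    Real.sq_sqrt (by positivity)
  have hval : (2 * ((n : ℝ) + 1) ^ 2) ^ n * ((n : ℝ) + 1)
      = (Real.sqrt 2 ^ n * ((n : ℝ) + 1) ^ n * Real.sqrt ((n : ℝ) + 1)) ^ 2 := by
    have e1 : (Real.sqrt 2 ^ n) ^ 2 = 2 ^ n := by
      rw [← pow_mul, mul_comm n 2, pow_mul, h2]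
    have e2 : ((((n:ℝ)+1)) ^ n) ^ 2 = (((n:ℝ)+1) ^ 2) ^ n := by
      rw [← pow_mul, mul_comm n 2, pow_mul]
    calc (2 * ((n : ℝ) + 1) ^ 2) ^ n * ((n : ℝ) + 1)
        = 2 ^ n * ((((n:ℝ)+1)) ^ 2) ^ n * ((n : ℝ) + 1) := by rw [mul_pow]
      _ = (Real.sqrt 2 ^ n) ^ 2 * ((((n:ℝ)+1)) ^ n) ^ 2 * (Real.sqrt ((n:ℝ)+1)) ^ 2 := by
          rw [e1, e2, hn1]
      _ = (Real.sqrt 2 ^ n * ((n : ℝ) + 1) ^ n * Real.sqrt ((n : ℝ) + 1)) ^ 2 := by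
          ring
  rw [hval, Real.sqrt_sq (by positivity)]

end SVol

/-- `volₙ(△ₙ°) = 2^{n/2} (n+1)^{n+1/2} / n!`. -/
theorem volume_polar_regular_simplex (n : ℕ) (hn : 1 ≤ n)
    (v : Fin (n + 1) → EuclideanSpace ℝ (Fin n))
    (hsum : ∑ i, v i = 0)
    (hedge : ∀ i j, i ≠ j → ‖v i - v j‖ = 1) :
    (volume (polarSet (convexHull ℝ (Set.range v)))).toReal
      = Real.sqrt 2 ^ n * ((n : ℝ) + 1) ^ n * Real.sqrt ((n : ℝ) + 1) / n.factorial := by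
  classical
  set w : Fin (n + 1) → EuclideanSpace ℝ (Fin n) :=
    fun k => (-(2 * ((n : ℝ) + 1))) • v k with hw
  have h1 : polarSet (convexHull ℝ (Set.range v)) = convexHull ℝ (Set.range w) :=
    SVol.polar_eq_hull v hsum hedge hn
  have huu := SVol.inner_uu v hsum hedge
  have hg : ∀ i j, ⟪SVol.uw w i, SVol.uw w j⟫ =
      if i = j then 4 * ((n : ℝ) + 1) ^ 2 else 2 * ((n : ℝ) + 1) ^ 2 := by
    intro i j
    have hwu : ∀ i : Fin n, SVol.uw w i = (-(2 * ((n:ℝ) + 1))) • (v i.succ - v 0) := by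
      intro i
      have : SVol.uw w i = w i.succ - w 0 := rfl
      rw [this, hw, smul_sub]
    rw [hwu i, hwu j, real_inner_smul_left, real_inner_smul_right, huu i j]
    by_cases h : i = j
    · rw [if_pos h, if_pos h]
      ring
    · rw [if_neg h, if_neg h]
      ring
  rw [h1, SVol.hull_w_eq w, measure_vadd,
    Measure.addHaar_image_linearMap volume (Matrix.toEuclideanLin (SVol.Umat w)) (SVol.DE n),
    SVol.det_L w hg, SVol.vol_DE n hn,
    ← ENNReal.ofReal_mul (by positivity), ENNReal.toReal_ofReal (by positivity)]
  have hfac : (0:ℝ) < n.factorial := by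
    exact_mod_cast Nat.factorial_pos n
  field_simp
end

section
/- Let n ≥ 1 and let q₀, q₁, …, q_m = q₀ be a closed polygonal line in ℝⁿ each of whose segments is directed along one of v₀,…,vₙ: for each j there are c_j ≥ 0 and i(j) ∈ {0,…,n} with q_{j+1} − q_j = c_j v_{i(j)}. Suppose that for every i ∈ {0,…,n} the total length of the segments directed along v_i satisfies Σ_{j : i(j) = i} c_j = n+1. Then the polygonal line can be covered by a translate of the permutohedron Pₙ: there exists t ∈ ℝⁿ with q_j ∈ Pₙ + t for all j (hence the whole line lies in Pₙ + t). -/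
open scoped BigOperators Pointwise RealInnerProductSpace
open MeasureTheory

namespace FitPerm

/-- weighted sum of a list of (length, label) by label weight `g`. -/
def Sw {ι : Type*} (g : ι → ℝ) : List (ℝ × ι) → ℝ
  | [] => 0
  | s :: t => s.1 * g s.2 + Sw g t

/-- trapezoid sum of the prefix function, starting at accumulated value `acc`. -/
noncomputable def trap {ι : Type*} (g : ι → ℝ) : List (ℝ × ι) → ℝ → ℝ
  | [], _ => 0
  | s :: t, acc => s.1 * acc + s.1 * (s.1 * g s.2) / 2 + trap g t (acc + s.1 * g s.2)

variable {ι : Type*}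

lemma Sw_append (g : ι → ℝ) (l₁ l₂ : List (ℝ × ι)) :
    Sw g (l₁ ++ l₂) = Sw g l₁ + Sw g l₂ := by
  induction l₁ with
  | nil => simp [Sw]
  | cons s t ih => simp [Sw, ih]; ring

lemma Sw_add (g₁ g₂ : ι → ℝ) (l : List (ℝ × ι)) :
    Sw (fun i => g₁ i + g₂ i) l = Sw g₁ l + Sw g₂ l := by
  induction l with
  | nil => simp [Sw]
  | cons s t ih => simp [Sw, ih]; ring

lemma Sw_nonneg {g : ι → ℝ} {l : List (ℝ × ι)}
    (h : ∀ s ∈ l, 0 ≤ s.1 ∧ 0 ≤ g s.2) : 0 ≤ Sw g l := by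
  induction l with
  | nil => simp [Sw]
  | cons s t ih =>
      have hs := h s (by simp)
      have ht : 0 ≤ Sw g t := ih (fun x hx => h x (by simp [hx]))
      have : 0 ≤ s.1 * g s.2 := mul_nonneg hs.1 hs.2
      simp only [Sw]; linarith

lemma Sw_le_Tlen {g : ι → ℝ} {l : List (ℝ × ι)}
    (h : ∀ s ∈ l, 0 ≤ s.1 ∧ g s.2 ≤ 1) : Sw g l ≤ Sw (fun _ => 1) l := by
  induction l with
  | nil => simp [Sw]
  | cons s t ih =>
      have hs := h s (by simp)
      have ht := ih (fun x hx => h x (by simp [hx]))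
      have : s.1 * g s.2 ≤ s.1 * 1 := mul_le_mul_of_nonneg_left hs.2 hs.1
      simp only [Sw]; linarith

lemma trap_acc (g : ι → ℝ) (l : List (ℝ × ι)) (acc : ℝ) :
    trap g l acc = trap g l 0 + acc * Sw (fun _ => 1) l := by
  induction l generalizing acc with
  | nil => simp [trap, Sw]
  | cons s t ih =>
      simp only [trap, Sw]
      rw [ih (acc + s.1 * g s.2), ih (0 + s.1 * g s.2)]
      ring

lemma trap_append (g : ι → ℝ) (l₁ l₂ : List (ℝ × ι)) (acc : ℝ) :
    trap g (l₁ ++ l₂) acc = trap g l₁ acc + trap g l₂ (acc + Sw g l₁) := by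
  induction l₁ generalizing acc with
  | nil => simp [trap, Sw]
  | cons s t ih =>
      simp only [trap, Sw, List.cons_append]
      rw [ih]
      ring_nf

lemma trap_add (g₁ g₂ : ι → ℝ) (l : List (ℝ × ι)) (a₁ a₂ : ℝ) :
    trap (fun i => g₁ i + g₂ i) l (a₁ + a₂) = trap g₁ l a₁ + trap g₂ l a₂ := by
  induction l generalizing a₁ a₂ with
  | nil => simp [trap]
  | cons s t ih =>
      simp only [trap]
      have : a₁ + a₂ + s.1 * (g₁ s.2 + g₂ s.2)
          = (a₁ + s.1 * g₁ s.2) + (a₂ + s.1 * g₂ s.2) := by ring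
      rw [this, ih]
      ring

/-- the potential function -/
noncomputable def Phi (α β P x : ℝ) : ℝ := (α * x ^ 2 - (max (x - β * P) 0) ^ 2) / 2

lemma step_ineq {α β P u u' d d' : ℝ} (hab : α + β = 1) (ha : 0 ≤ α) (hb : 0 ≤ β)
    (h1 : u ≤ u') (hu : 0 ≤ u) (hu' : u' ≤ P)
    (h3 : d ≤ α * u) (h4 : d ≤ β * (P - u))
    (h5 : d' ≤ α * u') (h6 : d' ≤ β * (P - u')) :
    (u' - u) * (d + d') / 2 ≤ Phi α β P u' - Phi α β P u := by
  unfold Phi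
  rcases le_or_gt u' (β * P) with hc1 | hc1
  · have hm1 : max (u - β * P) 0 = 0 := max_eq_right (by linarith)
    have hm2 : max (u' - β * P) 0 = 0 := max_eq_right (by linarith)
    rw [hm1, hm2]
    nlinarith [mul_nonneg (sub_nonneg.2 h1) (sub_nonneg.2 h1)]
  · rcases le_or_gt (β * P) u with hc2 | hc2
    · have hm1 : max (u - β * P) 0 = u - β * P := max_eq_left (by linarith)
      have hm2 : max (u' - β * P) 0 = u' - β * P := max_eq_left (by linarith)
      rw [hm1, hm2]
      nlinarith [mul_nonneg (sub_nonneg.2 h1) (sub_nonneg.2 h1)]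
    · have hm1 : max (u - β * P) 0 = 0 := max_eq_right (by linarith)
      have hm2 : max (u' - β * P) 0 = u' - β * P := max_eq_left (by linarith)
      rw [hm1, hm2]
      nlinarith [mul_nonneg (sub_nonneg.2 hc2.le) (sub_nonneg.2 hc1.le),
        mul_nonneg (sub_nonneg.2 hc2.le) hb, mul_nonneg (sub_nonneg.2 hc1.le) ha,
        mul_nonneg (sub_nonneg.2 h1) (sub_nonneg.2 h1)]


lemma Sw_sub_const (w : ι → ℝ) (a : ℝ) (l : List (ℝ × ι)) :
    Sw (fun i => w i - a) l = Sw w l - a * Sw (fun _ => 1) l := by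
  induction l with
  | nil => simp [Sw]
  | cons s t ih => simp only [Sw, ih]; ring

lemma core_aux (w : ι → ℝ) (α σ P : ℝ) (hP : 0 < P) (hα : α = σ / P)
    (hσ0 : 0 ≤ σ) (hσP : σ ≤ P) :
    ∀ l : List (ℝ × ι), (∀ s ∈ l, 0 ≤ s.1 ∧ 0 ≤ w s.2 ∧ w s.2 ≤ 1) →
    ∀ u G : ℝ, 0 ≤ u → u + Sw (fun _ => 1) l = P →
      0 ≤ G + α * u → G + α * u = σ - Sw w l →
      -(trap (fun i => w i - α) l G) ≤ Phi α (1-α) P P - Phi α (1-α) P u := by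
  intro l
  induction l with
  | nil =>
      intro _ u G hu hTl h3 _
      simp only [Sw] at hTl
      have : u = P := by linarith
      subst this
      simp [trap]
  | cons s t ih =>
      intro hmem u G hu hTl h3 h4
      have hs := hmem s (by simp)
      have hmt : ∀ x ∈ t, 0 ≤ x.1 ∧ 0 ≤ w x.2 ∧ w x.2 ≤ 1 :=
        fun x hx => hmem x (by simp [hx])
      have hα0 : 0 ≤ α := hα ▸ div_nonneg hσ0 hP.le
      have hα1 : α ≤ 1 := hα ▸ (div_le_one hP).2 hσP
      have hαP : α * P = σ := by rw [hα]; field_simp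
      set cc := s.1 with hcc
      set G' := G + cc * (w s.2 - α) with hG'
      set u' := u + cc with hu'
      have hTt : u' + Sw (fun _ => 1) t = P := by
        simp only [Sw] at hTl; rw [hu']; linarith
      have hTtn : 0 ≤ Sw (fun _ => 1) t :=
        Sw_nonneg (fun x hx => ⟨(hmt x hx).1, zero_le_one⟩)
      have hSwl : Sw w (s :: t) = cc * w s.2 + Sw w t := rfl
      have h3' : 0 ≤ G' + α * u' := by
        have : G' + α * u' = (G + α * u) + cc * w s.2 := by rw [hG', hu']; ring
        rw [this]
        have : 0 ≤ cc * w s.2 := mul_nonneg hs.1 hs.2.1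
        linarith
      have h4' : G' + α * u' = σ - Sw w t := by
        have e1 : G' + α * u' = (G + α * u) + cc * w s.2 := by rw [hG', hu']; ring
        rw [e1, h4, hSwl]; ring
      have hihres := ih hmt u' G' (by linarith [hs.1]) hTt h3' h4'
      -- backward bounds
      have hSwle : Sw w (s :: t) ≤ Sw (fun _ => 1) (s :: t) :=
        Sw_le_Tlen (fun x hx => ⟨(hmem x hx).1, (hmem x hx).2.2⟩)
      have hSwle' : Sw w t ≤ Sw (fun _ => 1) t :=
        Sw_le_Tlen (fun x hx => ⟨(hmt x hx).1, (hmt x hx).2.2⟩)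
      have hback : -G ≤ (1 - α) * (P - u) := by
        have hPu : P - u = Sw (fun _ => 1) (s :: t) := by simp only [Sw] at hTl ⊢; linarith
        nlinarith [h4, hSwle]
      have hback' : -G' ≤ (1 - α) * (P - u') := by
        have hPu : P - u' = Sw (fun _ => 1) t := by linarith
        nlinarith [h4', hSwle']
      have hstep := step_ineq (add_sub_cancel α 1 ▸ (by ring : α + (1-α) = 1))
        hα0 (by linarith) (by linarith [hs.1] : u ≤ u') hu
        (by linarith : u' ≤ P)
        (by linarith : -G ≤ α * u) hback
        (by linarith : -G' ≤ α * u') hback'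
      have hexp : trap (fun i => w i - α) (s :: t) G
          = cc * G + cc * (cc * (w s.2 - α)) / 2 + trap (fun i => w i - α) t G' := rfl
      have harith : -(cc * G + cc * (cc * (w s.2 - α)) / 2)
          = (u' - u) * (-G + -G') / 2 := by rw [hG', hu']; ring
      have := hstep
      rw [hexp]
      linarith [hihres, this, harith.ge, harith.le]

theorem core_rot (w : ι → ℝ) (l₁ l₂ : List (ℝ × ι))
    (hmem : ∀ s ∈ l₁ ++ l₂, 0 ≤ s.1 ∧ 0 ≤ w s.2 ∧ w s.2 ≤ 1)
    (hP : 0 < Sw (fun _ => 1) (l₁ ++ l₂)) :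
    Sw (fun i => w i - Sw w (l₁ ++ l₂) / Sw (fun _ => 1) (l₁ ++ l₂)) l₁
        * Sw (fun _ => 1) (l₁ ++ l₂)
      ≤ trap (fun i => w i - Sw w (l₁ ++ l₂) / Sw (fun _ => 1) (l₁ ++ l₂)) (l₁ ++ l₂) 0
        + Sw w (l₁ ++ l₂) * (Sw (fun _ => 1) (l₁ ++ l₂) - Sw w (l₁ ++ l₂)) / 2 := by
  set P := Sw (fun _ => 1) (l₁ ++ l₂) with hPdef
  set σ := Sw w (l₁ ++ l₂) with hσdef
  set g := fun i => w i - σ / P with hgdef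
  have hσ0 : 0 ≤ σ := Sw_nonneg (fun x hx => ⟨(hmem x hx).1, (hmem x hx).2.1⟩)
  have hσP : σ ≤ P := Sw_le_Tlen (fun x hx => ⟨(hmem x hx).1, (hmem x hx).2.2⟩)
  have hmem' : ∀ s ∈ l₂ ++ l₁, 0 ≤ s.1 ∧ 0 ≤ w s.2 ∧ w s.2 ≤ 1 := by
    intro x hx
    exact hmem x (by rw [List.mem_append] at hx ⊢; tauto)
  -- total of g over full list is 0
  have hgtot : ∀ l', Sw g l' = Sw w l' - (σ/P) * Sw (fun _ => 1) l' :=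
    fun l' => Sw_sub_const w (σ/P) l'
  have hPswap : Sw (fun _ => 1) (l₂ ++ l₁) = P := by
    rw [Sw_append, hPdef, Sw_append]; ring
  have hσswap : Sw w (l₂ ++ l₁) = σ := by
    rw [Sw_append, hσdef, Sw_append]; ring
  have hcore := core_aux w (σ/P) σ P hP rfl hσ0 hσP (l₂ ++ l₁) hmem' 0 0 le_rfl
      (by rw [hPswap]; ring)
      (by simp)
      (by rw [hσswap]; ring)
  -- evaluate Phi at P and 0
  have hαP : (σ/P) * P = σ := by field_simp
  have hPhiP : Phi (σ/P) (1 - σ/P) P P = σ * (P - σ) / 2 := by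
    unfold Phi
    have h1 : P - (1 - σ/P) * P = σ := by field_simp; ring
    rw [h1, max_eq_left hσ0]
    field_simp
  have hPhi0 : Phi (σ/P) (1 - σ/P) P 0 = 0 := by
    unfold Phi
    have h1 : (0:ℝ) - (1 - σ/P) * P ≤ 0 := by nlinarith
    rw [max_eq_right h1]
    ring
  rw [hPhiP, hPhi0] at hcore
  -- relate trap over (l₂ ++ l₁) to trap over (l₁ ++ l₂)
  have ht1 : trap g (l₂ ++ l₁) 0 = trap g l₂ 0 + trap g l₁ 0 + Sw g l₂ * Sw (fun _ => 1) l₁ := by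
    rw [trap_append, trap_acc g l₁ (0 + Sw g l₂)]
    ring
  have ht2 : trap g (l₁ ++ l₂) 0 = trap g l₁ 0 + trap g l₂ 0 + Sw g l₁ * Sw (fun _ => 1) l₂ := by
    rw [trap_append, trap_acc g l₂ (0 + Sw g l₁)]
    ring
  have hg0 : Sw g l₁ + Sw g l₂ = 0 := by
    have := hgtot (l₁ ++ l₂)
    rw [Sw_append, Sw_append] at this
    have h2 : Sw w l₁ + Sw w l₂ = σ := by rw [hσdef, Sw_append]
    have h3 : Sw (fun _ => (1:ℝ)) l₁ + Sw (fun _ => 1) l₂ = P := by rw [hPdef, Sw_append]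
    have h4 : (σ/P) * P = σ := by field_simp
    nlinarith [this]
  have hfin : trap g (l₂ ++ l₁) 0 = trap g (l₁ ++ l₂) 0 - Sw g l₁ * P := by
    rw [ht1, ht2]
    have h3 : Sw (fun _ => (1:ℝ)) l₁ + Sw (fun _ => 1) l₂ = P := by rw [hPdef, Sw_append]
    have : Sw g l₂ = -Sw g l₁ := by linarith
    rw [this]
    linear_combination (-(Sw g l₁)) * h3
  rw [hfin] at hcore
  linarith



variable {ι : Type*} [DecidableEq ι]

theorem exists_y (R : Finset ι) :
    ∀ (h : Finset ι → ℝ) (D : ℝ),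
    h ∅ = 0 →
    (∀ S ⊆ R, 0 ≤ h S) →
    (∀ A B : Finset ι, A ⊆ R → B ⊆ R → h (A ∪ B) + h (A ∩ B) ≤ h A + h B) →
    0 ≤ D →
    (∀ T ⊆ R, D ≤ h T + (R \ T).card) →
    ∃ y : ι → ℝ, (∀ a ∈ R, 0 ≤ y a ∧ y a ≤ 1) ∧ (∑ a ∈ R, y a = D) ∧
      (∀ S ⊆ R, ∑ a ∈ S, y a ≤ h S) := by
  induction R using Finset.induction_on with
  | empty =>
      intro h D h0 _ _ hD hHall
      have h1 := hHall ∅ (by simp)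
      simp [h0] at h1
      refine ⟨fun _ => 0, by simp, by simp [hD.antisymm h1], ?_⟩
      intro S hS
      rw [Finset.subset_empty.mp hS]
      simp [h0]
  | @insert r R' hr ih =>
      intro h D h0 hpos hsub hD hHall
      have hsubR' : R' ⊆ insert r R' := Finset.subset_insert r R'
      have hinsR : ∀ S ⊆ R', insert r S ⊆ insert r R' := fun S hS =>
        Finset.insert_subset_insert r hS
      set F : Finset (Finset ι) := (insert r R').powerset.filter (fun S => r ∈ S) with hF
      have hFne : F.Nonempty :=
        ⟨insert r R', by simp [hF, Finset.mem_powerset, Finset.mem_insert_self]⟩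
      set M : ℝ := (F.image h).min' (hFne.image h) with hM
      obtain ⟨Sstar, hSstarF, hSstarval⟩ : ∃ S ∈ F, h S = M := by
        obtain ⟨x, hx, hxe⟩ := Finset.mem_image.mp ((F.image h).min'_mem (hFne.image h))
        exact ⟨x, hx, hxe⟩
      have hSstarR : Sstar ⊆ insert r R' :=
        Finset.mem_powerset.mp (Finset.mem_filter.mp hSstarF).1
      have hrSstar : r ∈ Sstar := (Finset.mem_filter.mp hSstarF).2
      have hMle : ∀ S, S ⊆ insert r R' → r ∈ S → M ≤ h S := by
        intro S hSR hrS
        exact (F.image h).min'_le _ (Finset.mem_image_of_mem h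
          (Finset.mem_filter.mpr ⟨Finset.mem_powerset.mpr hSR, hrS⟩))
      set yr : ℝ := min 1 (min D M) with hyr
      have hM0 : 0 ≤ M := hSstarval ▸ hpos Sstar hSstarR
      have hyr0 : 0 ≤ yr := by
        simp only [hyr, le_min_iff]
        exact ⟨zero_le_one, hD, hM0⟩
      have hyr1 : yr ≤ 1 := min_le_left _ _
      have hyrD : yr ≤ D := le_trans (min_le_right _ _) (min_le_left _ _)
      have hyrM : yr ≤ M := le_trans (min_le_right _ _) (min_le_right _ _)
      set h' : Finset ι → ℝ := fun S => min (h S) (h (insert r S) - yr) with hh'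
      have h'le1 : ∀ S, h' S ≤ h S := fun S => min_le_left _ _
      have h'le2 : ∀ S, h' S ≤ h (insert r S) - yr := fun S => min_le_right _ _
      have h'0 : h' ∅ = 0 := by
        have h1 : (0:ℝ) ≤ h (insert r ∅) - yr := by
          have := hMle (insert r ∅)
            (Finset.insert_subset_insert r (Finset.empty_subset R')) (Finset.mem_insert_self r ∅)
          linarith
        rw [hh']; dsimp only; rw [h0, min_eq_left h1]
      have h'pos : ∀ S ⊆ R', 0 ≤ h' S := by
        intro S hS
        refine le_min (hpos S (hS.trans hsubR')) ?_
        have := hMle (insert r S) (hinsR S hS) (Finset.mem_insert_self r S)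
        linarith
      have h'sub : ∀ A B : Finset ι, A ⊆ R' → B ⊆ R' →
          h' (A ∪ B) + h' (A ∩ B) ≤ h' A + h' B := by
        intro A B hA hB
        have hrA : r ∉ A := fun hx => hr (hA hx)
        have hrB : r ∉ B := fun hx => hr (hB hx)
        have hAR : A ⊆ insert r R' := hA.trans hsubR'
        have hBR : B ⊆ insert r R' := hB.trans hsubR'
        have e1 : A ∪ insert r B = insert r (A ∪ B) := by rw [Finset.union_insert]
        have e2 : A ∩ insert r B = A ∩ B := Finset.inter_insert_of_notMem hrA
        have e3 : insert r A ∪ B = insert r (A ∪ B) := Finset.insert_union r A B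
        have e4 : insert r A ∩ B = A ∩ B := Finset.insert_inter_of_notMem hrB
        have e5 : insert r A ∪ insert r B = insert r (A ∪ B) := by
          rw [Finset.insert_union, Finset.union_insert, Finset.insert_idem]
        have e6 : insert r A ∩ insert r B = insert r (A ∩ B) := by
          rw [Finset.insert_inter_of_mem (Finset.mem_insert_self r B),
            Finset.inter_insert_of_notMem hrA]
        have hu1 := h'le1 (A ∪ B)
        have hu2 := h'le2 (A ∪ B)
        have hi1 := h'le1 (A ∩ B)
        have hi2 := h'le2 (A ∩ B)
        rcases min_cases (h A) (h (insert r A) - yr) with ⟨hAv, _⟩ | ⟨hAv, _⟩ <;>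
          rcases min_cases (h B) (h (insert r B) - yr) with ⟨hBv, _⟩ | ⟨hBv, _⟩
        · have hs := hsub A B hAR hBR
          have eA : h' A = h A := hAv
          have eB : h' B = h B := hBv
          rw [eA, eB]; linarith
        · have hs := hsub A (insert r B) hAR (hinsR B hB)
          rw [e1, e2] at hs
          have eA : h' A = h A := hAv
          have eB : h' B = h (insert r B) - yr := hBv
          rw [eA, eB]; linarith
        · have hs := hsub (insert r A) B (hinsR A hA) hBR
          rw [e3, e4] at hs
          have eA : h' A = h (insert r A) - yr := hAv
          have eB : h' B = h B := hBv
          rw [eA, eB]; linarith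
        · have hs := hsub (insert r A) (insert r B) (hinsR A hA) (hinsR B hB)
          rw [e5, e6] at hs
          have eA : h' A = h (insert r A) - yr := hAv
          have eB : h' B = h (insert r B) - yr := hBv
          rw [eA, eB]; linarith
      have h'Hall : ∀ T ⊆ R', D - yr ≤ h' T + ((R' \ T).card : ℝ) := by
        intro T hT
        have hTR : T ⊆ insert r R' := hT.trans hsubR'
        have hrT : r ∉ T := fun hx => hr (hT hx)
        have hsd1 : insert r R' \ insert r T = R' \ T := by
          ext x
          by_cases hxr : x = r
          · subst hxr; simp [Finset.mem_sdiff, hr]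
          · simp [Finset.mem_sdiff, Finset.mem_insert, hxr]
        have hsd2 : insert r R' \ T = insert r (R' \ T) := by
          ext x
          by_cases hxr : x = r
          · subst hxr; simp [Finset.mem_sdiff, hrT]
          · simp [Finset.mem_sdiff, Finset.mem_insert, hxr]
        have hrnot : r ∉ R' \ T := fun hx => hr (Finset.mem_sdiff.mp hx).1
        have hcard2 : ((insert r R' \ T).card : ℝ) = (R' \ T).card + 1 := by
          rw [hsd2, Finset.card_insert_of_notMem hrnot]
          push_cast; ring
        -- branch (a): via insert r T
        have hba : D - yr ≤ (h (insert r T) - yr) + ((R' \ T).card : ℝ) := by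
          have := hHall (insert r T) (hinsR T hT)
          rw [hsd1] at this
          linarith
        -- branch (b): via T, casing on the value of yr
        have hbb : D - yr ≤ h T + ((R' \ T).card : ℝ) := by
          rcases min_cases 1 (min D M) with ⟨hv, _⟩ | ⟨hv, _⟩
          · -- yr = 1
            have := hHall T hTR
            rw [hcard2] at this
            rw [hyr, hv]
            linarith
          · rcases min_cases D M with ⟨hv2, _⟩ | ⟨hv2, _⟩
            · -- yr = D
              have h1 := hpos T hTR
              have h2 : (0:ℝ) ≤ ((R' \ T).card : ℝ) := Nat.cast_nonneg _
              rw [hyr, hv, hv2]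
              linarith
            · -- yr = M = h Sstar
              have hyrv : yr = h Sstar := by rw [hyr, hv, hv2, hSstarval]
              have hUnion : T ∪ Sstar ⊆ insert r R' := Finset.union_subset hTR hSstarR
              have hHallU := hHall (T ∪ Sstar) hUnion
              have hsubm := hsub T Sstar hTR hSstarR
              have hint : 0 ≤ h (T ∩ Sstar) :=
                hpos _ ((Finset.inter_subset_left).trans hTR)
              -- card bound
              have hcsub : insert r R' \ (T ∪ Sstar) ⊆ R' \ T := by
                intro x hx
                rw [Finset.mem_sdiff] at hx
                rw [Finset.mem_sdiff]
                have hxr : x ≠ r := by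
                  rintro rfl
                  exact hx.2 (Finset.mem_union_right _ hrSstar)
                rcases Finset.mem_insert.mp hx.1 with h' | h'
                · exact absurd h' hxr
                · exact ⟨h', fun hxT => hx.2 (Finset.mem_union_left _ hxT)⟩
              have hcard3 : ((insert r R' \ (T ∪ Sstar)).card : ℝ) ≤ ((R' \ T).card : ℝ) := by
                exact_mod_cast Finset.card_le_card hcsub
              rw [hyrv]
              linarith
        rcases min_cases (h T) (h (insert r T) - yr) with ⟨hv, _⟩ | ⟨hv, _⟩
        · have eT : h' T = h T := hv
          rw [eT]; exact hbb
        · have eT : h' T = h (insert r T) - yr := hv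
          rw [eT]; exact hba
      obtain ⟨y', hy'bnd, hy'sum, hy'le⟩ := ih h' (D - yr) h'0 h'pos h'sub
        (by linarith) h'Hall
      refine ⟨fun a => if a = r then yr else y' a, ?_, ?_, ?_⟩
      · intro a ha
        by_cases har : a = r
        · simp only [har, if_pos rfl]; exact ⟨hyr0, hyr1⟩
        · simp only [if_neg har]
          rcases Finset.mem_insert.mp ha with h1 | h1
          · exact absurd h1 har
          · exact hy'bnd a h1
      · rw [Finset.sum_insert hr]
        simp only [if_true, eq_self_iff_true]
        have : ∑ a ∈ R', (if a = r then yr else y' a) = ∑ a ∈ R', y' a := by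
          apply Finset.sum_congr rfl
          intro a ha
          rw [if_neg (by rintro rfl; exact hr ha)]
        rw [this, hy'sum]
        ring
      · intro S hS
        by_cases hrS : r ∈ S
        · have hS' : S.erase r ⊆ R' := by
            intro x hx
            obtain ⟨hxr, hxS⟩ := Finset.mem_erase.mp hx
            rcases Finset.mem_insert.mp (hS hxS) with h1 | h1
            · exact absurd h1 hxr
            · exact h1
          have hsum : ∑ a ∈ S, (if a = r then yr else y' a)
              = yr + ∑ a ∈ S.erase r, y' a := by
            rw [← Finset.add_sum_erase S _ hrS]
            simp only [if_pos rfl]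
            congr 1
            apply Finset.sum_congr rfl
            intro a ha
            rw [if_neg (Finset.mem_erase.mp ha).1]
          rw [hsum]
          have h1 := hy'le (S.erase r) hS'
          have h2 := h'le2 (S.erase r)
          rw [Finset.insert_erase hrS] at h2
          linarith
        · have hS' : S ⊆ R' := by
            intro x hx
            rcases Finset.mem_insert.mp (hS hx) with h1 | h1
            · exact absurd (h1 ▸ hx) hrS
            · exact h1
          have hsum : ∑ a ∈ S, (if a = r then yr else y' a) = ∑ a ∈ S, y' a := by
            apply Finset.sum_congr rfl
            intro a ha
            rw [if_neg (by rintro rfl; exact hrS ha)]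
          rw [hsum]
          exact (hy'le S hS').trans (h'le1 S)


lemma sum_erase_last {k : ℕ} (f : Fin (k+1) → ℝ) :
    ∑ a ∈ Finset.univ.erase (Fin.last k), f a = ∑ b : Fin k, f b.castSucc := by
  have h1 := Finset.sum_erase_add Finset.univ f (Finset.mem_univ (Fin.last k))
  have h2 := Fin.sum_univ_castSucc f
  linarith

theorem landau : ∀ (n : ℕ) (s : Fin (n+1) → ℝ),
    (∑ a, s a = (n+1) * n / 2) →
    (∀ S : Finset (Fin (n+1)), (S.card : ℝ) * ((S.card : ℝ) - 1) / 2 ≤ ∑ a ∈ S, s a) →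
    ∃ μ : Fin (n+1) → Fin (n+1) → ℝ,
      (∀ a, μ a a = 0) ∧
      (∀ a b, a ≠ b → 0 ≤ μ a b) ∧
      (∀ a b, a ≠ b → μ a b + μ b a = 1) ∧
      (∀ a, ∑ b, μ a b = s a) := by
  intro n
  induction n with
  | zero =>
      intro s hsum _
      refine ⟨fun _ _ => 0, fun a => rfl, fun a b hab => le_rfl, ?_, ?_⟩
      · intro a b hab
        exact absurd ((Fin.fin_one_eq_zero a).trans (Fin.fin_one_eq_zero b).symm) hab
      · intro a
        have ha : a = 0 := Fin.fin_one_eq_zero a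
        subst ha
        rw [Fin.sum_univ_one] at hsum ⊢
        rw [hsum]
        norm_num
  | succ n ih =>
      intro s hsum hlow
      set r : Fin (n+2) := Fin.last (n+1) with hrdef
      set R : Finset (Fin (n+2)) := Finset.univ.erase r with hRdef
      have hcardR : (R.card : ℝ) = n + 1 := by
        rw [hRdef, Finset.card_erase_of_mem (Finset.mem_univ r)]
        simp [Fintype.card_fin]
      set h : Finset (Fin (n+2)) → ℝ :=
        fun S => ∑ a ∈ S, s a - (S.card : ℝ) * ((S.card : ℝ) - 1) / 2 with hhdef
      set D : ℝ := (n+1) - s r with hDdef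
      have hh0 : h ∅ = 0 := by simp [hhdef]
      have hhpos : ∀ S ⊆ R, 0 ≤ h S := by
        intro S _
        have := hlow S
        rw [hhdef]; dsimp only; linarith
      have hhsub : ∀ A B : Finset (Fin (n+2)), A ⊆ R → B ⊆ R →
          h (A ∪ B) + h (A ∩ B) ≤ h A + h B := by
        intro A B _ _
        have hsums : ∑ a ∈ (A ∪ B), s a + ∑ a ∈ (A ∩ B), s a
            = ∑ a ∈ A, s a + ∑ a ∈ B, s a := Finset.sum_union_inter
        have hcards : A.card + B.card = (A ∪ B).card + (A ∩ B).card :=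
          (Finset.card_union_add_card_inter A B).symm
        have hcardsR : (A.card : ℝ) + (B.card : ℝ) = ((A ∪ B).card : ℝ) + ((A ∩ B).card : ℝ) := by
          exact_mod_cast congrArg (Nat.cast (R := ℝ)) hcards
        have hAle : ((A).card : ℝ) ≤ ((A ∪ B).card : ℝ) := by
          exact_mod_cast Finset.card_le_card Finset.subset_union_left
        have hBle : ((B).card : ℝ) ≤ ((A ∪ B).card : ℝ) := by
          exact_mod_cast Finset.card_le_card Finset.subset_union_right
        rw [hhdef]; dsimp only
        nlinarith [mul_nonneg (sub_nonneg.2 hAle) (sub_nonneg.2 hBle)]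
      have hsr : s r ≤ n + 1 := by
        have h1 := hlow R
        have h2 : ∑ a ∈ R, s a = ∑ a, s a - s r := by
          rw [hRdef]
          have := Finset.sum_erase_add Finset.univ s (Finset.mem_univ r)
          linarith
        rw [h2, hsum, hcardR] at h1
        push_cast at h1
        nlinarith
      have hD0 : 0 ≤ D := by rw [hDdef]; linarith
      have hHall : ∀ T ⊆ R, D ≤ h T + ((R \ T).card : ℝ) := by
        intro T hT
        have hrT : r ∉ T := fun hx => (Finset.mem_erase.mp (hT hx)).1 rfl
        have hcardsd : ((R \ T).card : ℝ) = (R.card : ℝ) - T.card := by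
          rw [Finset.card_sdiff_of_subset hT]
          have := Finset.card_le_card hT
          push_cast [Nat.cast_sub this]
          ring
        have hins := hlow (insert r T)
        rw [Finset.sum_insert hrT, Finset.card_insert_of_notMem hrT] at hins
        push_cast at hins
        rw [hhdef]; dsimp only
        rw [hcardsd, hcardR, hDdef]
        nlinarith
      obtain ⟨y, hybnd, hysum, hyle⟩ := exists_y R h D hh0 hhpos hhsub hD0 hHall
      -- reduced scores
      set s' : Fin (n+1) → ℝ := fun b => s b.castSucc - y b.castSucc with hs'def
      have hcsne : ∀ b : Fin (n+1), b.castSucc ≠ r := fun b => Fin.ne_of_lt (Fin.castSucc_lt_last b)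
      have hcsR : ∀ b : Fin (n+1), b.castSucc ∈ R := fun b =>
        Finset.mem_erase.mpr ⟨hcsne b, Finset.mem_univ _⟩
      have hsumcs : ∀ f : Fin (n+2) → ℝ, ∑ a ∈ R, f a = ∑ b : Fin (n+1), f b.castSucc := by
        intro f
        rw [hRdef]
        exact sum_erase_last f
      have hs'sum : ∑ b, s' b = (n+1) * n / 2 := by
        rw [hs'def]
        have e1 : ∑ b : Fin (n+1), (s b.castSucc - y b.castSucc)
            = ∑ a ∈ R, (fun a => s a - y a) a := (hsumcs (fun a => s a - y a)).symm
        rw [e1, Finset.sum_sub_distrib, hysum]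
        have e2 : ∑ a ∈ R, s a = ∑ a, s a - s r := by
          have := Finset.sum_erase_add Finset.univ s (Finset.mem_univ r)
          rw [hRdef]; linarith
        rw [e2, hsum, hDdef]
        push_cast
        ring
      have hs'low : ∀ S' : Finset (Fin (n+1)),
          (S'.card : ℝ) * ((S'.card : ℝ) - 1) / 2 ≤ ∑ b ∈ S', s' b := by
        intro S'
        set S : Finset (Fin (n+2)) := S'.image Fin.castSucc with hSdef
        have hcardS : S.card = S'.card :=
          Finset.card_image_of_injective S' (Fin.castSucc_injective _)
        have hSR : S ⊆ R := by
          intro x hx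
          obtain ⟨b, _, rfl⟩ := Finset.mem_image.mp hx
          exact hcsR b
        have hsumS : ∀ f : Fin (n+2) → ℝ, ∑ a ∈ S, f a = ∑ b ∈ S', f b.castSucc := by
          intro f
          rw [hSdef]
          exact Finset.sum_image (fun x _ y _ hxy => Fin.castSucc_injective _ hxy)
        have h1 := hyle S hSR
        have h2 := hlow S
        rw [hsumS s] at h2
        rw [hhdef] at h1; dsimp only at h1
        rw [hsumS s, hsumS y] at h1
        rw [hs'def]
        dsimp only
        rw [Finset.sum_sub_distrib]
        rw [hcardS] at h1 h2
        linarith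
      obtain ⟨μ', hμ'diag, hμ'pos, hμ'sym, hμ'score⟩ := ih s' hs'sum hs'low
      -- assemble the full tournament
      set μ : Fin (n+2) → Fin (n+2) → ℝ := fun a b =>
        if ha : a = r then (if b = r then 0 else 1 - y b)
        else (if hb : b = r then y a
          else μ' (a.castPred ha) (b.castPred hb)) with hμdef
      have hμrr : μ r r = 0 := by rw [hμdef]; simp
      have hμval1 : ∀ b, b ≠ r → μ r b = 1 - y b := by
        intro b hb; rw [hμdef]; simp [hb]
      have hμval2 : ∀ a, a ≠ r → μ a r = y a := by
        intro a ha; rw [hμdef]; simp [ha]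
      have hμval3 : ∀ a b (ha : a ≠ r) (hb : b ≠ r),
          μ a b = μ' (a.castPred ha) (b.castPred hb) := by
        intro a b ha hb; rw [hμdef]; simp [ha, hb]
      have hyboth : ∀ a, a ≠ r → 0 ≤ y a ∧ y a ≤ 1 := by
        intro a ha
        exact hybnd a (Finset.mem_erase.mpr ⟨ha, Finset.mem_univ _⟩)
      refine ⟨μ, ?_, ?_, ?_, ?_⟩
      · intro a
        by_cases ha : a = r
        · subst ha; exact hμrr
        · rw [hμval3 a a ha ha]
          exact hμ'diag _
      · intro a b hab
        by_cases ha : a = r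
        · subst ha
          have hb : b ≠ r := fun hb => hab hb.symm
          rw [hμval1 b hb]
          linarith [(hyboth b hb).2]
        · by_cases hb : b = r
          · subst hb
            rw [hμval2 a ha]
            exact (hyboth a ha).1
          · rw [hμval3 a b ha hb]
            exact hμ'pos _ _ (fun hc => hab (by
              have := congrArg Fin.castSucc hc
              rwa [Fin.castSucc_castPred, Fin.castSucc_castPred] at this))
      · intro a b hab
        by_cases ha : a = r
        · subst ha
          have hb : b ≠ r := fun hb => hab hb.symm
          rw [hμval1 b hb, hμval2 b hb]
          ring
        · by_cases hb : b = r
          · subst hb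
            rw [hμval2 a ha, hμval1 a ha]
            ring
          · rw [hμval3 a b ha hb, hμval3 b a hb ha]
            exact hμ'sym _ _ (fun hc => hab (by
              have := congrArg Fin.castSucc hc
              rwa [Fin.castSucc_castPred, Fin.castSucc_castPred] at this))
      · intro a
        by_cases ha : a = r
        · subst ha
          have e1 : ∑ b, μ r b = ∑ b ∈ R, (1 - y b) + μ r r := by
            rw [hRdef]
            have := Finset.sum_erase_add Finset.univ (μ r) (Finset.mem_univ r)
            have e2 : ∑ b ∈ Finset.univ.erase r, μ r b = ∑ b ∈ Finset.univ.erase r, (1 - y b) := by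
              apply Finset.sum_congr rfl
              intro b hb
              exact hμval1 b (Finset.mem_erase.mp hb).1
            linarith
          rw [e1, hμrr, Finset.sum_sub_distrib, hysum]
          have : ∑ _b ∈ R, (1:ℝ) = (R.card : ℝ) := by simp
          rw [this, hcardR, hDdef]
          ring
        · have e1 : ∑ b, μ a b = ∑ b ∈ R, μ a b + μ a r := by
            rw [hRdef]
            have := Finset.sum_erase_add Finset.univ (μ a) (Finset.mem_univ r)
            linarith
          have e2 : ∑ b ∈ R, μ a b = ∑ b' : Fin (n+1), μ a b'.castSucc := hsumcs (μ a)
          have e3 : ∀ b' : Fin (n+1), μ a b'.castSucc = μ' (a.castPred ha) b' := by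
            intro b'
            rw [hμval3 a b'.castSucc ha (hcsne b')]
            simp [Fin.castPred_castSucc]
          have e4 : ∑ b' : Fin (n+1), μ a b'.castSucc = s' (a.castPred ha) := by
            rw [Finset.sum_congr rfl (fun b' _ => e3 b')]
            exact hμ'score _
          rw [e1, e2, e4, hμval2 a ha, hs'def]
          dsimp only
          rw [Fin.castSucc_castPred]
          ring


open scoped Pointwise in
lemma mem_finset_sum_sets {κ E : Type*} [AddCommMonoid E] (F : Finset κ)
    (K : κ → Set E) (z : κ → E) (hz : ∀ p ∈ F, z p ∈ K p) :
    (∑ p ∈ F, z p) ∈ (∑ p ∈ F, K p) := by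
  classical
  induction F using Finset.cons_induction with
  | empty => simp
  | cons r F hr ih =>
      rw [Finset.sum_cons, Finset.sum_cons]
      exact Set.add_mem_add (hz r (Finset.mem_cons_self r F))
        (ih fun p hp => hz p (Finset.mem_cons.mpr (Or.inr hp)))

lemma sum_pairs {N : ℕ} {E : Type*} [AddCommGroup E] [Module ℝ E]
    (μ : Fin N → Fin N → ℝ) (hdiag : ∀ a, μ a a = 0) (v : Fin N → E) :
    ∑ p ∈ Finset.univ.filter (fun p : Fin N × Fin N => p.1 < p.2),
        (μ p.1 p.2 • v p.1 + μ p.2 p.1 • v p.2)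
      = ∑ a, (∑ b, μ a b) • v a := by
  classical
  set F : Fin N × Fin N → E := fun p => μ p.1 p.2 • v p.1 with hF
  have hRHS : ∑ a, (∑ b, μ a b) • v a = ∑ p : Fin N × Fin N, F p := by
    rw [Fintype.sum_prod_type]
    apply Finset.sum_congr rfl
    intro a _
    rw [Finset.sum_smul]
  have hsplit1 : ∑ p : Fin N × Fin N, F p
      = ∑ p ∈ Finset.univ.filter (fun p : Fin N × Fin N => p.1 < p.2), F p
        + ∑ p ∈ Finset.univ.filter (fun p : Fin N × Fin N => ¬ p.1 < p.2), F p :=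
    (Finset.sum_filter_add_sum_filter_not _ _ _).symm
  have hsplit2 : ∑ p ∈ Finset.univ.filter (fun p : Fin N × Fin N => ¬ p.1 < p.2), F p
      = ∑ p ∈ (Finset.univ.filter (fun p : Fin N × Fin N => ¬ p.1 < p.2)).filter
          (fun p => p.2 < p.1), F p
        + ∑ p ∈ (Finset.univ.filter (fun p : Fin N × Fin N => ¬ p.1 < p.2)).filter
          (fun p => ¬ p.2 < p.1), F p :=
    (Finset.sum_filter_add_sum_filter_not _ _ _).symm
  have hdiagzero : ∑ p ∈ (Finset.univ.filter (fun p : Fin N × Fin N => ¬ p.1 < p.2)).filter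
      (fun p => ¬ p.2 < p.1), F p = 0 := by
    apply Finset.sum_eq_zero
    intro p hp
    rw [Finset.mem_filter] at hp
    obtain ⟨hp1, hp2⟩ := hp
    rw [Finset.mem_filter] at hp1
    have : p.1 = p.2 := le_antisymm (not_lt.mp hp2) (not_lt.mp hp1.2)
    rw [hF]
    dsimp only
    rw [← this, hdiag, zero_smul]
  have hgt : ∑ p ∈ (Finset.univ.filter (fun p : Fin N × Fin N => ¬ p.1 < p.2)).filter
      (fun p => p.2 < p.1), F p
      = ∑ p ∈ Finset.univ.filter (fun p : Fin N × Fin N => p.1 < p.2),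
          μ p.2 p.1 • v p.2 := by
    apply Finset.sum_nbij' (fun p => Prod.swap p) (fun p => Prod.swap p)
    · intro p hp
      rw [Finset.mem_filter] at hp ⊢
      obtain ⟨hp1, hp2⟩ := hp
      exact ⟨Finset.mem_univ _, hp2⟩
    · intro p hp
      rw [Finset.mem_filter] at hp ⊢
      refine ⟨Finset.mem_filter.mpr ⟨Finset.mem_univ _, ?_⟩, ?_⟩
      · exact not_lt.mpr (le_of_lt hp.2)
      · exact hp.2
    · intro p _; exact Prod.swap_swap p
    · intro p _; exact Prod.swap_swap p
    · intro p _
      rfl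
  rw [hRHS, hsplit1, hsplit2, hdiagzero, hgt]
  rw [Finset.sum_add_distrib, add_zero]


lemma Sw_zero {ι : Type*} (l : List (ℝ × ι)) : Sw (fun _ => (0:ℝ)) l = 0 := by
  induction l with
  | nil => simp [Sw]
  | cons s t ih => simp [Sw, ih]

lemma trap_zero {ι : Type*} (l : List (ℝ × ι)) : trap (fun _ => (0:ℝ)) l 0 = 0 := by
  induction l with
  | nil => simp [trap]
  | cons s t ih => simp [trap, ih]

lemma Sw_finsetSum {ι κ : Type*} (S : Finset κ) (g : κ → ι → ℝ) (l : List (ℝ × ι)) :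
    Sw (fun i => ∑ a ∈ S, g a i) l = ∑ a ∈ S, Sw (g a) l := by
  classical
  induction S using Finset.cons_induction with
  | empty => simpa using Sw_zero l
  | cons r F hr ih =>
      rw [Finset.sum_cons]
      have : (fun i => ∑ a ∈ Finset.cons r F hr, g a i)
          = fun i => g r i + ∑ a ∈ F, g a i := by
        funext i; rw [Finset.sum_cons]
      rw [this, Sw_add, ih]

lemma trap_finsetSum {ι κ : Type*} (S : Finset κ) (g : κ → ι → ℝ) (l : List (ℝ × ι)) :
    trap (fun i => ∑ a ∈ S, g a i) l 0 = ∑ a ∈ S, trap (g a) l 0 := by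
  classical
  induction S using Finset.cons_induction with
  | empty => simpa using trap_zero l
  | cons r F hr ih =>
      rw [Finset.sum_cons]
      have e1 : (fun i => ∑ a ∈ Finset.cons r F hr, g a i)
          = fun i => g r i + ∑ a ∈ F, g a i := by
        funext i; rw [Finset.sum_cons]
      have e2 := trap_add (g r) (fun i => ∑ a ∈ F, g a i) l 0 0
      rw [e1]
      rw [show (0:ℝ) = 0 + 0 by ring, e2, ih]
      norm_num

lemma Sw_eq_sum_map {ι : Type*} (g : ι → ℝ) (l : List (ℝ × ι)) :
    Sw g l = (l.map (fun s => s.1 * g s.2)).sum := by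
  induction l with
  | nil => simp [Sw]
  | cons s t ih => simp [Sw, ih]

end FitPerm

open FitPerm

/-- a closed polygonal line whose segments are directed along `v₀, …, vₙ`
and whose total length along each direction `vᵢ` equals `n + 1` can be covered by a
translate of the permutohedron `Pₙ`. -/
theorem fit_into_permutohedron (n : ℕ) (hn : 1 ≤ n)
    (v : Fin (n + 1) → EuclideanSpace ℝ (Fin n))
    (hsum : ∑ i, v i = 0)
    (hedge : ∀ i j, i ≠ j → ‖v i - v j‖ = 1)
    (m : ℕ) (q : Fin m → EuclideanSpace ℝ (Fin n))
    (c : Fin m → ℝ) (idx : Fin m → Fin (n + 1))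
    (hc : ∀ j, 0 ≤ c j)
    (hseg : ∀ j, q (cyc j) - q j = c j • v (idx j))
    (htotal : ∀ i : Fin (n + 1), ∑ j ∈ Finset.univ.filter (fun j => idx j = i), c j = n + 1) :
    ∃ t : EuclideanSpace ℝ (Fin n), ∀ j, q j - t ∈ permutohedron v := by
  classical
  rcases Nat.eq_zero_or_pos m with hm0 | hm
  · subst hm0; exact ⟨0, fun j => j.elim0⟩
  set Nr : ℝ := (n : ℝ) + 1 with hNr
  have hNr0 : (0:ℝ) < Nr := by rw [hNr]; positivity
  set w : Fin (n+1) → Fin (n+1) → ℝ := fun a i => if i = a then 1 else 0 with hw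
  set L : List (ℝ × Fin (n+1)) := (List.finRange m).map (fun j => (c j, idx j)) with hLdef
  have hLlen : L.length = m := by simp [hLdef]
  have hSwL : ∀ g : Fin (n+1) → ℝ, Sw g L = ∑ j : Fin m, c j * g (idx j) := by
    intro g
    rw [hLdef, Sw_eq_sum_map, List.map_map, Fin.sum_univ_def]
    rfl
  have hSwdir : ∀ a : Fin (n+1), Sw (w a) L = Nr := by
    intro a
    rw [hSwL]
    have e : ∀ j : Fin m, c j * w a (idx j) = if idx j = a then c j else 0 := by
      intro j; rw [hw]; dsimp only; split <;> ring
    rw [Finset.sum_congr rfl (fun j _ => e j), ← Finset.sum_filter, htotal a, hNr]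
  have hWS : ∀ (S : Finset (Fin (n+1))) (i : Fin (n+1)),
      (if i ∈ S then (1:ℝ) else 0) = ∑ a ∈ S, w a i := by
    intro S i
    rw [hw]
    dsimp only
    rw [Finset.sum_ite_eq S i (fun _ => (1:ℝ))]
  have hSwS : ∀ S : Finset (Fin (n+1)),
      Sw (fun i => if i ∈ S then (1:ℝ) else 0) L = S.card * Nr := by
    intro S
    rw [funext (hWS S), Sw_finsetSum, Finset.sum_congr rfl (fun a _ => hSwdir a),
      Finset.sum_const, nsmul_eq_mul]
  have hone : (fun _ : Fin (n+1) => (1:ℝ))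
      = fun i => if i ∈ (Finset.univ : Finset (Fin (n+1))) then (1:ℝ) else 0 := by
    funext i; simp
  have hP : Sw (fun _ => (1:ℝ)) L = Nr^2 := by
    rw [hone, hSwS]
    simp only [Finset.card_univ, Fintype.card_fin]
    rw [hNr]
    push_cast
    ring
  have hP0 : 0 < Sw (fun _ => (1:ℝ)) L := by rw [hP]; positivity
  have hmemL : ∀ s ∈ L, 0 ≤ s.1 := by
    intro s hs
    rw [hLdef] at hs
    obtain ⟨j, _, rfl⟩ := List.mem_map.mp hs
    exact hc j
  set gdir : Fin (n+1) → Fin (n+1) → ℝ := fun a i => w a i - 1/Nr with hgdir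
  set τ : Fin (n+1) → ℝ := fun a => trap (gdir a) L 0 / Nr^2 with hτ
  have hτsum : ∑ a, τ a = 0 := by
    rw [hτ]
    dsimp only
    rw [← Finset.sum_div, ← trap_finsetSum]
    have e : (fun i => ∑ a : Fin (n+1), gdir a i) = fun _ => (0:ℝ) := by
      funext i
      rw [hgdir]
      dsimp only
      rw [Finset.sum_sub_distrib, ← hWS Finset.univ i]
      simp only [Finset.mem_univ, if_true, Finset.sum_const, Finset.card_univ,
        Fintype.card_fin, nsmul_eq_mul]
      rw [hNr]
      push_cast
      field_simp
      ring
    rw [e, trap_zero]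
    simp
  -- the key inequality
  have key : ∀ (S : Finset (Fin (n+1))) (j : Fin m),
      ∑ a ∈ S, (Sw (w a) (L.take j.val) - Sw (fun _ => 1) (L.take j.val) / Nr - τ a)
        ≤ (S.card : ℝ) * (Nr - S.card) / 2 := by
    intro S j
    set wS : Fin (n+1) → ℝ := fun i => if i ∈ S then 1 else 0 with hwS
    have hsplit : L.take j.val ++ L.drop j.val = L := List.take_append_drop _ _
    have hmem2 : ∀ s ∈ L.take j.val ++ L.drop j.val, 0 ≤ s.1 ∧ 0 ≤ wS s.2 ∧ wS s.2 ≤ 1 := by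
      intro s hs
      rw [hsplit] at hs
      refine ⟨hmemL s hs, ?_, ?_⟩ <;>
        · rw [hwS]; dsimp only; split <;> norm_num
    have hcore := core_rot wS (L.take j.val) (L.drop j.val) hmem2 (by rw [hsplit]; exact hP0)
    rw [hsplit] at hcore
    rw [hSwS S, hP] at hcore
    have hgS : (fun i => wS i - (S.card : ℝ) * Nr / Nr^2) = fun i => ∑ a ∈ S, gdir a i := by
      funext i
      rw [hgdir, hwS]
      dsimp only
      rw [hWS S i, Finset.sum_sub_distrib, Finset.sum_const, nsmul_eq_mul]
      have : (S.card : ℝ) * Nr / Nr^2 = S.card * (1/Nr) := by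
        field_simp
      rw [this]
    rw [hgS, trap_finsetSum, Sw_finsetSum] at hcore
    have hgd : ∀ a, Sw (gdir a) (L.take j.val)
        = Sw (w a) (L.take j.val) - (1/Nr) * Sw (fun _ => 1) (L.take j.val) := by
      intro a
      rw [hgdir]
      exact Sw_sub_const (w a) (1/Nr) (L.take j.val)
    rw [Finset.sum_congr rfl (fun a (_ : a ∈ S) => hgd a)] at hcore
    -- abbreviate
    set k : ℝ := (S.card : ℝ) with hk
    set T : ℝ := Sw (fun _ => (1:ℝ)) (L.take j.val) with hT
    set X : ℝ := ∑ a ∈ S, (Sw (w a) (L.take j.val) - 1/Nr * T) with hX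
    set W : ℝ := ∑ a ∈ S, trap (gdir a) L 0 with hW
    have hτS : ∑ a ∈ S, τ a = W / Nr^2 := by
      rw [hτ, hW]
      dsimp only
      rw [Finset.sum_div]
    have hgoalform : ∑ a ∈ S, (Sw (w a) (L.take j.val) - T / Nr - τ a)
        = X - W / Nr^2 := by
      rw [hX, ← hτS, ← Finset.sum_sub_distrib]
      apply Finset.sum_congr rfl
      intro a _
      ring
    rw [hgoalform]
    -- hcore : X * Nr^2 ≤ W + k * Nr * (Nr^2 - k * Nr) / 2
    have hNr2 : (0:ℝ) < Nr^2 := by positivity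
    have hfact : k * Nr * (Nr^2 - k * Nr) / 2 = (k * (Nr - k) / 2) * Nr^2 := by ring
    rw [hfact] at hcore
    have hW2 : W / Nr^2 * Nr^2 = W := div_mul_cancel₀ W (ne_of_gt hNr2)
    have hcontr : (X - W/Nr^2) * Nr^2 ≤ (k*(Nr-k)/2) * Nr^2 := by
      rw [sub_mul, hW2]
      linarith
    exact le_of_mul_le_mul_right hcontr hNr2
  -- scores
  set sc : Fin m → Fin (n+1) → ℝ := fun j a =>
    Sw (w a) (L.take j.val) - Sw (fun _ => 1) (L.take j.val) / Nr - τ a + (n : ℝ)/2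
    with hsc
  have hAtot : ∀ j : Fin m, ∑ a, Sw (w a) (L.take j.val) = Sw (fun _ => 1) (L.take j.val) := by
    intro j
    rw [← Sw_finsetSum]
    congr 1
    funext i
    rw [← hWS Finset.univ i]
    simp
  have hsctot : ∀ j : Fin m, ∑ a, sc j a = (↑(n+1)) * (↑n) / 2 := by
    intro j
    rw [hsc]
    dsimp only
    rw [Finset.sum_add_distrib, Finset.sum_sub_distrib, Finset.sum_sub_distrib, hAtot j, hτsum]
    simp only [Finset.sum_const, Finset.card_univ, Fintype.card_fin, nsmul_eq_mul]
    rw [hNr]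
    push_cast
    field_simp
    ring
  have hsclow : ∀ (j : Fin m) (S : Finset (Fin (n+1))),
      (S.card : ℝ) * ((S.card : ℝ) - 1) / 2 ≤ ∑ a ∈ S, sc j a := by
    intro j S
    have hkey := key Sᶜ j
    have hzero : ∑ a, (Sw (w a) (L.take j.val) - Sw (fun _ => 1) (L.take j.val) / Nr - τ a) = 0 := by
      rw [Finset.sum_sub_distrib, Finset.sum_sub_distrib, hAtot j, hτsum]
      simp only [Finset.sum_const, Finset.card_univ, Fintype.card_fin, nsmul_eq_mul]
      rw [hNr]
      field_simp
      push_cast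
      ring
    have hsplitsum := Finset.sum_add_sum_compl S
      (fun a => Sw (w a) (L.take j.val) - Sw (fun _ => 1) (L.take j.val) / Nr - τ a)
    have hcardc : ((Sᶜ : Finset (Fin (n+1))).card : ℝ) = Nr - S.card := by
      rw [Finset.card_compl]
      have hle : S.card ≤ Fintype.card (Fin (n+1)) := Finset.card_le_univ S
      rw [Nat.cast_sub hle]
      simp [hNr, Fintype.card_fin]
    rw [hcardc] at hkey
    have hS : ∑ a ∈ S, (Sw (w a) (L.take j.val) - Sw (fun _ => 1) (L.take j.val) / Nr - τ a)
        ≥ -((Nr - S.card) * (Nr - (Nr - S.card)) / 2) := by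
      rw [hzero] at hsplitsum
      linarith
    have hsceq : ∑ a ∈ S, sc j a
        = ∑ a ∈ S, (Sw (w a) (L.take j.val) - Sw (fun _ => 1) (L.take j.val) / Nr - τ a)
          + S.card * ((n : ℝ)/2) := by
      rw [hsc]
      dsimp only
      rw [Finset.sum_add_distrib, Finset.sum_const, nsmul_eq_mul]
    rw [hsceq]
    have hNrn : Nr = (n:ℝ) + 1 := hNr
    nlinarith [hS]
  -- the landau tournaments
  have hμex : ∀ j : Fin m, ∃ μ : Fin (n+1) → Fin (n+1) → ℝ,
      (∀ a, μ a a = 0) ∧ (∀ a b, a ≠ b → 0 ≤ μ a b) ∧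
      (∀ a b, a ≠ b → μ a b + μ b a = 1) ∧ (∀ a, ∑ b, μ a b = sc j a) := by
    intro j
    exact landau n (sc j) (by rw [hsctot j]; push_cast; ring) (hsclow j)
  -- the vertex formula
  have htake_succ : ∀ (g : Fin (n+1) → ℝ) (jv : ℕ) (h : jv < m),
      Sw g (L.take (jv+1)) = Sw g (L.take jv) + c ⟨jv, h⟩ * g (idx ⟨jv, h⟩) := by
    intro g jv h
    have hfr : jv < (List.finRange m).length := by simpa using h
    have e0 : (List.finRange m).take (jv+1)
        = (List.finRange m).take jv ++ [(⟨jv, h⟩ : Fin m)] := by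
      rw [List.take_succ, List.getElem?_eq_getElem hfr, Option.toList_some]
      congr
      · rw [List.getElem_finRange]
        apply Fin.ext
        simp
    have e1 : L.take (jv+1) = L.take jv ++ [(c ⟨jv, h⟩, idx ⟨jv, h⟩)] := by
      rw [hLdef, ← List.map_take, ← List.map_take, e0, List.map_append]
      simp
    rw [e1, Sw_append]
    simp [Sw]
  have hq : ∀ (jv : ℕ) (h : jv < m),
      q ⟨jv, h⟩ = q ⟨0, hm⟩ + ∑ a, Sw (w a) (L.take jv) • v a := by
    intro jv
    induction jv with
    | zero =>
        intro h
        simp [Sw]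
    | succ jv ih =>
        intro h
        have hjv : jv < m := Nat.lt_of_succ_lt h
        have hcyc : cyc ⟨jv, hjv⟩ = ⟨jv+1, h⟩ := by
          unfold cyc
          ext
          simp [Nat.mod_eq_of_lt h]
        have hstep := hseg ⟨jv, hjv⟩
        rw [hcyc] at hstep
        have e1 : q ⟨jv+1, h⟩ = q ⟨jv, hjv⟩ + c ⟨jv, hjv⟩ • v (idx ⟨jv, hjv⟩) := by
          have := hstep
          rw [sub_eq_iff_eq_add] at this
          rw [this]
          abel
        rw [e1, ih hjv]
        have e2 : ∑ a, Sw (w a) (L.take (jv+1)) • v a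
            = ∑ a, Sw (w a) (L.take jv) • v a + c ⟨jv, hjv⟩ • v (idx ⟨jv, hjv⟩) := by
          rw [Finset.sum_congr rfl (fun a (_ : a ∈ Finset.univ) => by
            rw [htake_succ (w a) jv hjv, add_smul])]
          rw [Finset.sum_add_distrib]
          congr 1
          have e3 : ∀ a : Fin (n+1), (c ⟨jv, hjv⟩ * w a (idx ⟨jv, hjv⟩)) • v a
              = if idx ⟨jv, hjv⟩ = a then c ⟨jv, hjv⟩ • v a else 0 := by
            intro a
            rw [hw]
            dsimp only
            split
            · rw [mul_one]
            · rw [mul_zero, zero_smul]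
          rw [Finset.sum_congr rfl (fun a (_ : a ∈ Finset.univ) => e3 a)]
          rw [Finset.sum_ite_eq Finset.univ (idx ⟨jv, hjv⟩) (fun a => c ⟨jv, hjv⟩ • v a)]
          simp
        rw [e2]
        abel
  -- the translation
  refine ⟨q ⟨0, hm⟩ + ∑ a, τ a • v a, ?_⟩
  intro j
  obtain ⟨μ, hμdiag, hμpos, hμsym, hμscore⟩ := hμex j
  have hqj : q j - (q ⟨0, hm⟩ + ∑ a, τ a • v a) = ∑ a, (sc j a) • v a := by
    have hj : q j = q ⟨j.val, j.isLt⟩ := by congr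
    rw [hj, hq j.val j.isLt]
    have e1 : q ⟨0, hm⟩ + ∑ a, Sw (w a) (L.take j.val) • v a
        - (q ⟨0, hm⟩ + ∑ a, τ a • v a)
        = ∑ a, (Sw (w a) (L.take j.val) - τ a) • v a := by
      have e0 : ∑ a, (Sw (w a) (L.take j.val) - τ a) • v a
          = ∑ a, (Sw (w a) (L.take j.val) • v a - τ a • v a) :=
        Finset.sum_congr rfl (fun a _ => sub_smul _ _ _)
      rw [e0, Finset.sum_sub_distrib]
      abel
    rw [e1]
    have e2 : ∑ a, (sc j a) • v a
        = ∑ a, (Sw (w a) (L.take j.val) - τ a) • v a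
          + ((n:ℝ)/2 - Sw (fun _ => 1) (L.take j.val) / Nr) • ∑ a, v a := by
      rw [Finset.smul_sum, ← Finset.sum_add_distrib]
      apply Finset.sum_congr rfl
      intro a _
      rw [hsc]
      dsimp only
      rw [← add_smul]
      congr 1
      ring
    rw [e2, hsum, smul_zero, add_zero]
  rw [hqj]
  have hsum_pairs := sum_pairs μ hμdiag v
  have hscore_eq : ∑ a, (∑ b, μ a b) • v a = ∑ a, (sc j a) • v a := by
    apply Finset.sum_congr rfl
    intro a _
    rw [hμscore a]
  rw [← hscore_eq, ← hsum_pairs]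
  unfold permutohedron
  apply mem_finset_sum_sets
  intro p hp
  have hplt : p.1 < p.2 := (Finset.mem_filter.mp hp).2
  have hpne : p.1 ≠ p.2 := ne_of_lt hplt
  exact ⟨μ p.1 p.2, μ p.2 p.1, hμpos _ _ hpne, hμpos _ _ (Ne.symm hpne),
    hμsym _ _ hpne, rfl⟩
end

section
/- Sharp isoperimetric inequality for billiard trajectories in the ℓ₁-norm: for every convex body K ⊂ ℝⁿ, the shortest closed billiard trajectory in K measured in the ℓ₁-norm satisfies ξ_{□ₙ}(K)ⁿ ≤ 2ⁿ · n! · volₙ(K), where □ₙ = [−1,1]ⁿ (so that ‖q‖_{□ₙ} = Σᵢ |qᵢ| is the ℓ₁-norm). -/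
open scoped BigOperators Pointwise RealInnerProductSpace
open MeasureTheory

section Aux

open Filter

private lemma suppNorm_box {n : ℕ} (q : EuclideanSpace ℝ (Fin n)) :
    suppNorm {x : EuclideanSpace ℝ (Fin n) | ∀ i, |x i| ≤ 1} q = ∑ i, |q i| := by
  classical
  apply IsGreatest.csSup_eq
  constructor
  · refine ⟨(WithLp.toLp 2 (fun i => if 0 ≤ q i then (1:ℝ) else -1) : EuclideanSpace ℝ (Fin n)), ?_, ?_⟩
    · intro i
      simp only [PiLp.toLp_apply]
      split <;> simp
    · simp only [PiLp.inner_apply, RCLike.inner_apply, conj_trivial, PiLp.toLp_apply]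
      refine Finset.sum_congr rfl fun i _ => ?_
      split
      · rename_i h; rw [mul_one, abs_of_nonneg h]
      · rename_i h; rw [abs_of_neg (lt_of_not_ge h)]; ring
  · rintro r ⟨p, hp, rfl⟩
    simp only [PiLp.inner_apply, RCLike.inner_apply, conj_trivial]
    refine Finset.sum_le_sum fun i _ => ?_
    rw [mul_comm]
    calc p i * q i ≤ |p i * q i| := le_abs_self _
      _ = |p i| * |q i| := abs_mul _ _
      _ ≤ 1 * |q i| := mul_le_mul_of_nonneg_right (hp i) (abs_nonneg _)
      _ = |q i| := one_mul _

private lemma chord_exists {n : ℕ} {K : Set (EuclideanSpace ℝ (Fin n))}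
    (hcomp : IsCompact K) (hne : K.Nonempty) (j : Fin n) :
    (sSup {t : ℝ | 0 ≤ t ∧ ∃ x ∈ K, x + t • EuclideanSpace.single j 1 ∈ K})
      ∈ {t : ℝ | 0 ≤ t ∧ ∃ x ∈ K, x + t • EuclideanSpace.single j 1 ∈ K} := by
  set ee := (EuclideanSpace.single j 1 : EuclideanSpace ℝ (Fin n)) with hee
  have hee1 : ‖ee‖ = 1 := by simp [hee]
  obtain ⟨M, hM⟩ := isBounded_iff_forall_norm_le.1 hcomp.isBounded
  set A := {t : ℝ | 0 ≤ t ∧ ∃ x ∈ K, x + t • ee ∈ K} with hA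
  have hbound : ∀ t ∈ A, t ≤ 2 * M := by
    rintro t ⟨ht0, x, hx, hx'⟩
    have h1 : ‖x + t • ee‖ ≤ M := hM _ hx'
    have h2 : ‖x‖ ≤ M := hM _ hx
    have h3 : t = ‖(x + t • ee) - x‖ := by
      rw [add_sub_cancel_left, norm_smul, hee1]
      simp [abs_of_nonneg ht0]
    rw [h3]
    calc ‖(x + t • ee) - x‖ ≤ ‖x + t • ee‖ + ‖x‖ := norm_sub_le _ _
      _ ≤ 2 * M := by linarith
  set S := {q : EuclideanSpace ℝ (Fin n) × ℝ |
    q.1 ∈ K ∧ q.2 ∈ Set.Icc 0 (2*M) ∧ q.1 + q.2 • ee ∈ K} with hS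
  have hKcl : IsClosed K := hcomp.isClosed
  have hScl : IsClosed S := by
    have h1 : IsClosed {q : EuclideanSpace ℝ (Fin n) × ℝ | q.1 ∈ K} :=
      hKcl.preimage continuous_fst
    have h2 : IsClosed {q : EuclideanSpace ℝ (Fin n) × ℝ | q.2 ∈ Set.Icc 0 (2*M)} :=
      isClosed_Icc.preimage continuous_snd
    have h3 : IsClosed {q : EuclideanSpace ℝ (Fin n) × ℝ | q.1 + q.2 • ee ∈ K} :=
      hKcl.preimage (continuous_fst.add (continuous_snd.smul continuous_const))
    exact h1.inter (h2.inter h3)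
  have hSsub : S ⊆ K ×ˢ Set.Icc 0 (2*M) := fun q hq => ⟨hq.1, hq.2.1⟩
  have hScomp : IsCompact S := (hcomp.prod isCompact_Icc).of_isClosed_subset hScl hSsub
  have hAS : A = Prod.snd '' S := by
    ext t
    constructor
    · rintro ⟨ht0, x, hx, hx'⟩
      exact ⟨(x, t), ⟨hx, ⟨ht0, hbound t ⟨ht0, x, hx, hx'⟩⟩, hx'⟩, rfl⟩
    · rintro ⟨⟨x, t'⟩, ⟨hx, ht', hx'⟩, rfl⟩
      exact ⟨ht'.1, x, hx, hx'⟩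
  have hAcomp : IsCompact A := by rw [hAS]; exact hScomp.image continuous_snd
  have hAne : A.Nonempty := by
    obtain ⟨x, hx⟩ := hne
    exact ⟨0, le_refl 0, x, hx, by simpa using hx⟩
  exact hAcomp.sSup_mem hAne

private lemma chord_bddAbove {n : ℕ} {K : Set (EuclideanSpace ℝ (Fin n))}
    (hcomp : IsCompact K) (j : Fin n) :
    BddAbove {t : ℝ | 0 ≤ t ∧ ∃ x ∈ K, x + t • EuclideanSpace.single j 1 ∈ K} := by
  obtain ⟨M, hM⟩ := isBounded_iff_forall_norm_le.1 hcomp.isBounded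
  refine ⟨2 * M, ?_⟩
  rintro t ⟨ht0, x, hx, hx'⟩
  have h1 : ‖x + t • (EuclideanSpace.single j 1 : EuclideanSpace ℝ (Fin n))‖ ≤ M := hM _ hx'
  have h2 : ‖x‖ ≤ M := hM _ hx
  have h3 : t = ‖(x + t • (EuclideanSpace.single j 1 : EuclideanSpace ℝ (Fin n))) - x‖ := by
    rw [add_sub_cancel_left, norm_smul]
    simp [abs_of_nonneg ht0]
  rw [h3]
  calc ‖(x + t • (EuclideanSpace.single j 1 : EuclideanSpace ℝ (Fin n))) - x‖
      ≤ ‖x + t • (EuclideanSpace.single j 1 : EuclideanSpace ℝ (Fin n))‖ + ‖x‖ := norm_sub_le _ _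
    _ ≤ 2 * M := by linarith

private lemma segLemma : ∀ (n : ℕ) (L : ℝ), 0 ≤ L → ∀ K : Set (Fin n → ℝ),
    Convex ℝ K → IsCompact K → K.Nonempty →
    (∀ j : Fin n, ∃ x, x ∈ K ∧ x + L • (Pi.single j 1 : Fin n → ℝ) ∈ K) →
    ENNReal.ofReal (L ^ n / n.factorial) ≤ volume K := by
  intro n
  induction n with
  | zero =>
    intro L hL K hconv hcomp hne hseg
    obtain ⟨x, hx⟩ := hne
    have hK : K = Set.univ := by
      ext y
      simp only [Set.mem_univ, iff_true]
      have : y = x := funext fun j => j.elim0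
      rwa [this]
    rw [hK]
    rw [volume_pi, Measure.pi_univ]
    simp [Nat.factorial]
  | succ n ih =>
    intro L hL K hconv hcomp hne hseg
    rcases eq_or_lt_of_le hL with hL0 | hLpos
    · rw [← hL0]
      simp
    classical
    set e := MeasurableEquiv.piFinSuccAbove (fun _ : Fin (n+1) => ℝ) (Fin.last n) with he
    have hKmeas : MeasurableSet K := hcomp.isClosed.measurableSet
    have hSmeas : MeasurableSet (⇑e '' K) := e.measurableSet_image.2 hKmeas
    have hmp := measurePreserving_piFinSuccAbove (fun _ : Fin (n+1) => (volume : Measure ℝ)) (Fin.last n)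
    -- projection
    set proj : (Fin (n+1) → ℝ) → (Fin n → ℝ) := fun x j => x ((Fin.last n).succAbove j) with hprojdef
    set sec : (Fin n → ℝ) → Set ℝ :=
      fun y => {t | ∃ x, x ∈ K ∧ x (Fin.last n) = t ∧ proj x = y} with hsecdef
    have hsec_pre : ∀ y : Fin n → ℝ, (fun t : ℝ => (t, y)) ⁻¹' (⇑e '' K) = sec y := by
      intro y
      ext t
      simp only [Set.mem_preimage, Set.mem_image, hsecdef, Set.mem_setOf_eq]
      constructor
      · rintro ⟨x, hx, hex⟩
        have h1 : x (Fin.last n) = t := congrArg Prod.fst hex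
        have h2 : proj x = y := congrArg Prod.snd hex
        exact ⟨x, hx, h1, h2⟩
      · rintro ⟨x, hx, h1, h2⟩
        exact ⟨x, hx, Prod.ext h1 h2⟩
    set f : (Fin n → ℝ) → ENNReal := fun y => volume (sec y) with hfdef
    have hf_meas : Measurable f := by
      have := measurable_measure_prodMk_right (μ := (volume : Measure ℝ)) hSmeas
      simpa [hsec_pre] using this
    have hvol2 : volume K = ∫⁻ y, f y := by
      have h1 : volume K
          = ((volume : Measure ℝ).prod (Measure.pi fun _ : Fin n => (volume : Measure ℝ))) (⇑e '' K) := by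
        rw [volume_pi, ← hmp.measure_preimage hSmeas.nullMeasurableSet,
          Set.preimage_image_eq _ e.injective]
      rw [h1, Measure.prod_apply_symm hSmeas]
      rw [show (Measure.pi fun _ : Fin n => (volume : Measure ℝ)) = volume from (volume_pi).symm]
      exact lintegral_congr fun y => by rw [hsec_pre]
    -- finiteness of sections
    obtain ⟨M, hM⟩ := isBounded_iff_forall_norm_le.1 hcomp.isBounded
    have hfin : ∀ y, f y ≠ ⊤ := by
      intro y
      have hsub : sec y ⊆ Set.Icc (-M) M := by
        rintro t ⟨x, hx, rfl, -⟩
        have h1 : |x (Fin.last n)| ≤ ‖x‖ := by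
          simpa using norm_le_pi_norm x (Fin.last n)
        have h2 := hM x hx
        have := abs_le.1 (h1.trans h2)
        exact ⟨this.1, this.2⟩
      have : f y ≤ volume (Set.Icc (-M) M) := measure_mono hsub
      rw [Real.volume_Icc] at this
      exact ne_top_of_le_ne_top (by simp) this
    -- the projection body
    set P : Set (Fin n → ℝ) := proj '' K with hPdef
    have hprojlin : proj = ⇑(LinearMap.funLeft ℝ ℝ (Fin.last n).succAbove) := rfl
    have hPconv : Convex ℝ P := by
      rw [hPdef, hprojlin]; exact hconv.linear_image _
    have hprojcont : Continuous proj := continuous_pi fun j => continuous_apply _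
    have hPcomp : IsCompact P := hcomp.image hprojcont
    have hPne : P.Nonempty := hne.image _
    have hPseg : ∀ j : Fin n, ∃ y, y ∈ P ∧ y + L • (Pi.single j 1 : Fin n → ℝ) ∈ P := by
      intro j
      obtain ⟨x, hx, hx'⟩ := hseg j.castSucc
      refine ⟨proj x, ⟨x, hx, rfl⟩, ⟨x + L • (Pi.single j.castSucc 1 : Fin (n+1) → ℝ), hx', ?_⟩⟩
      funext k
      simp only [hprojdef, Pi.add_apply, Pi.smul_apply, Pi.single_apply, Fin.succAbove_last,
        smul_eq_mul, Fin.castSucc_inj]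
    have hP := ih L hL P hPconv hPcomp hPne hPseg
    have hPfin : volume P ≠ ⊤ := hPcomp.measure_lt_top.ne
    -- convexity of sections
    have hsecconv : ∀ y, Convex ℝ (sec y) := by
      intro y a ha b hb α β hα hβ hab
      obtain ⟨xa, hxa, hta, hpa⟩ := ha
      obtain ⟨xb, hxb, htb, hpb⟩ := hb
      refine ⟨α • xa + β • xb, hconv hxa hxb hα hβ hab, ?_, ?_⟩
      · simp [← hta, ← htb, smul_eq_mul]
      · funext j
        have : (α • xa + β • xb) ((Fin.last n).succAbove j)
            = α * proj xa j + β * proj xb j := rfl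
        rw [hprojdef]
        simp only []
        rw [this, hpa, hpb]
        have : α * y j + β * y j = (α + β) * y j := by ring
        rw [this, hab, one_mul]
    -- the apex segment
    obtain ⟨p, hp, hp'⟩ := hseg (Fin.last n)
    set z₀ : Fin n → ℝ := proj p with hz₀
    -- key bound
    have key : ∀ s : ℝ, 0 ≤ s → s ≤ 1 → ∀ y' ∈ P,
        ENNReal.ofReal ((1 - s) * L) ≤ f ((1 - s) • z₀ + s • y') := by
      rintro s hs0 hs1 y' ⟨x', hx', rfl⟩
      set u := (1 - s) • p + s • x' with hu
      set v := (1 - s) • (p + L • (Pi.single (Fin.last n) 1 : Fin (n+1) → ℝ)) + s • x' with hv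
      have hu' : u ∈ K := hconv hp hx' (by linarith) hs0 (by ring)
      have hv' : v ∈ K := hconv hp' hx' (by linarith) hs0 (by ring)
      have hproj_u : proj u = (1 - s) • z₀ + s • proj x' := rfl
      have hproj_v : proj v = proj u := by
        funext j
        have hne : (Fin.last n).succAbove j ≠ Fin.last n := Fin.succAbove_ne _ _
        simp only [hprojdef, hv, hu, Pi.add_apply, Pi.smul_apply, smul_eq_mul,
          Pi.single_apply, if_neg hne]
        ring
      have hvlast : v (Fin.last n) = u (Fin.last n) + (1 - s) * L := by
        simp only [hv, hu, Pi.add_apply, Pi.smul_apply, smul_eq_mul, Pi.single_apply,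
          if_pos rfl, if_true]
        ring
      have hmemu : u (Fin.last n) ∈ sec (proj u) := ⟨u, hu', rfl, rfl⟩
      have hmemv : u (Fin.last n) + (1 - s) * L ∈ sec (proj u) := ⟨v, hv', hvlast, hproj_v⟩
      have hnn : (0:ℝ) ≤ (1 - s) * L := mul_nonneg (by linarith) hL
      have hIcc : Set.Icc (u (Fin.last n)) (u (Fin.last n) + (1 - s) * L) ⊆ sec (proj u) := by
        rw [← segment_eq_Icc (by linarith : u (Fin.last n) ≤ u (Fin.last n) + (1 - s) * L)]
        exact (hsecconv _).segment_subset hmemu hmemv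
      calc ENNReal.ofReal ((1 - s) * L)
          = volume (Set.Icc (u (Fin.last n)) (u (Fin.last n) + (1 - s) * L)) := by
            rw [Real.volume_Icc]; ring_nf
        _ ≤ volume (sec (proj u)) := measure_mono hIcc
        _ = f ((1 - s) • z₀ + s • proj x') := by rw [hfdef, hproj_u]
    set g : (Fin n → ℝ) → ℝ := fun y => (f y).toReal with hgdef
    have himg : ∀ s : ℝ, 0 ≤ s →
        volume ((fun y => (1 - s) • z₀ + s • y) '' P) = ENNReal.ofReal (s ^ n) * volume P := by
      intro s hs
      have himg2 : ((fun y : Fin n → ℝ => (1 - s) • z₀ + s • y) '' P)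
          = ((1 - s) • z₀) +ᵥ (s • P) := by
        ext w
        simp only [Set.mem_image, Set.mem_vadd_set, Set.mem_smul_set, vadd_eq_add]
        constructor
        · rintro ⟨y, hy, rfl⟩; exact ⟨s • y, ⟨y, hy, rfl⟩, rfl⟩
        · rintro ⟨w', ⟨y, hy, rfl⟩, rfl⟩; exact ⟨y, hy, rfl⟩
      rw [himg2, measure_vadd, Measure.addHaar_smul]
      congr 1
      rw [Module.finrank_pi, Fintype.card_fin]
      rw [abs_of_nonneg (pow_nonneg hs n)]
    have hmeasbound : ∀ t ∈ Set.Ioo (0:ℝ) L,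
        ENNReal.ofReal (((L - t)/L) ^ n) * volume P ≤ volume {y | t < g y} := by
      intro t ht
      set σ := (L - t)/L with hσ
      have hσpos : 0 < σ := div_pos (by linarith [ht.2]) hLpos
      have hσle : σ ≤ 1 := by rw [div_le_one hLpos]; linarith [ht.1]
      have hsub : ∀ s : ℝ, 0 ≤ s → s < σ →
          ((fun y => (1 - s) • z₀ + s • y) '' P) ⊆ {y | t < g y} := by
        intro s hs0 hsσ
        rintro _ ⟨y', hy', rfl⟩
        have hk := key s hs0 (hsσ.le.trans hσle) y' hy'
        have ht' : t < (1 - s) * L := by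
          rw [hσ, lt_div_iff₀ hLpos] at hsσ
          nlinarith
        have h3 : (1 - s) * L ≤ g ((1 - s) • z₀ + s • y') :=
          (ENNReal.ofReal_le_iff_le_toReal (hfin _)).1 hk
        exact lt_of_lt_of_le ht' h3
      set sk : ℕ → ℝ := fun k => σ * (1 - 1/(k+1)) with hsk
      have hsk0 : ∀ k : ℕ, 0 ≤ sk k := by
        intro k
        have h1 : (1:ℝ)/(k+1) ≤ 1 := by
          rw [div_le_one (by positivity)]
          simp [Nat.cast_nonneg]
        exact mul_nonneg hσpos.le (by linarith)
      have hsklt : ∀ k : ℕ, sk k < σ := by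
        intro k
        have h1 : (0:ℝ) < 1/(k+1) := by positivity
        have h2 : σ * (1 - 1/(k+1)) < σ * 1 := by
          apply mul_lt_mul_of_pos_left _ hσpos
          linarith
        simpa [hsk] using h2
      have hle : ∀ k : ℕ, ENNReal.ofReal ((sk k) ^ n) * volume P ≤ volume {y | t < g y} := by
        intro k
        rw [← himg _ (hsk0 k)]
        exact measure_mono (hsub _ (hsk0 k) (hsklt k))
      have htend : Tendsto (fun k : ℕ => ENNReal.ofReal ((sk k) ^ n) * volume P) atTop
          (nhds (ENNReal.ofReal (σ ^ n) * volume P)) := by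
        have h1 : Tendsto sk atTop (nhds σ) := by
          have h0 : Tendsto (fun k : ℕ => (1:ℝ)/(k+1)) atTop (nhds 0) :=
            tendsto_one_div_add_atTop_nhds_zero_nat
          have := (tendsto_const_nhds (x := σ)).mul ((tendsto_const_nhds (x := (1:ℝ))).sub h0)
          simpa [hsk, one_div] using this
        exact ENNReal.Tendsto.mul_const (ENNReal.tendsto_ofReal (h1.pow n)) (Or.inr hPfin)
      exact le_of_tendsto htend (Filter.Eventually.of_forall hle)
    -- layer cake
    have hg_nn : 0 ≤ᵐ[(volume : Measure (Fin n → ℝ))] g :=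
      Filter.Eventually.of_forall fun y => ENNReal.toReal_nonneg
    have hg_meas : AEMeasurable g (volume : Measure (Fin n → ℝ)) :=
      (hf_meas.ennreal_toReal).aemeasurable
    have hlayer : ∫⁻ y, f y = ∫⁻ t in Set.Ioi (0:ℝ), volume {y | t < g y} := by
      rw [show (∫⁻ y, f y) = ∫⁻ y, ENNReal.ofReal (g y) from
        lintegral_congr fun y => (ENNReal.ofReal_toReal (hfin y)).symm]
      exact lintegral_eq_lintegral_meas_lt volume hg_nn hg_meas
    have hcont : Continuous (fun t : ℝ => ((L - t)/L) ^ n) :=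
      ((continuous_const.sub continuous_id).div_const L).pow n
    have hI : ∫⁻ t in Set.Ioo (0:ℝ) L, ENNReal.ofReal (((L - t)/L) ^ n)
        = ENNReal.ofReal (L/(n+1)) := by
      have hint : IntegrableOn (fun t : ℝ => ((L - t)/L) ^ n) (Set.Ioo 0 L) :=
        (hcont.integrableOn_Icc).mono_set Set.Ioo_subset_Icc_self
      have hnn : 0 ≤ᵐ[volume.restrict (Set.Ioo (0:ℝ) L)] fun t => ((L - t)/L) ^ n := by
        refine (ae_restrict_iff' measurableSet_Ioo).2 (Filter.Eventually.of_forall ?_)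
        intro t ht
        exact pow_nonneg (div_nonneg (by linarith [ht.2]) hL) n
      rw [← ofReal_integral_eq_lintegral_ofReal hint hnn]
      congr 1
      rw [← integral_Ioc_eq_integral_Ioo, ← intervalIntegral.integral_of_le hLpos.le]
      have hrw : ∀ t : ℝ, ((L - t)/L) ^ n = (L - t) ^ n * (L ^ n)⁻¹ := fun t => by
        rw [div_pow, div_eq_mul_inv]
      simp_rw [hrw]
      rw [intervalIntegral.integral_mul_const]
      rw [intervalIntegral.integral_comp_sub_left (fun u => u ^ n) L]
      simp only [sub_self, sub_zero]
      rw [integral_pow]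
      have h1 : ((n:ℝ)+1) ≠ 0 := by positivity
      have h2 : (L:ℝ) ≠ 0 := hLpos.ne'
      field_simp
      ring
    have hmain : ENNReal.ofReal (L/(n+1)) * volume P ≤ volume K := by
      rw [hvol2, hlayer]
      calc ENNReal.ofReal (L/(n+1)) * volume P
          = (∫⁻ t in Set.Ioo (0:ℝ) L, ENNReal.ofReal (((L - t)/L) ^ n)) * volume P := by rw [hI]
        _ = ∫⁻ t in Set.Ioo (0:ℝ) L, ENNReal.ofReal (((L - t)/L) ^ n) * volume P :=
            (lintegral_mul_const _ (hcont.measurable.ennreal_ofReal)).symm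
        _ ≤ ∫⁻ t in Set.Ioo (0:ℝ) L, volume {y | t < g y} := by
            refine lintegral_mono_ae ?_
            refine (ae_restrict_iff' measurableSet_Ioo).2 (Filter.Eventually.of_forall ?_)
            exact fun t ht => hmeasbound t ht
        _ ≤ ∫⁻ t in Set.Ioi (0:ℝ), volume {y | t < g y} :=
            lintegral_mono' (Measure.restrict_mono Set.Ioo_subset_Ioi_self le_rfl) le_rfl
    calc ENNReal.ofReal (L ^ (n+1) / (n+1).factorial)
        = ENNReal.ofReal (L/(n+1)) * ENNReal.ofReal (L ^ n / n.factorial) := by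
          rw [← ENNReal.ofReal_mul (div_nonneg hL (by positivity))]
          congr 1
          rw [Nat.factorial_succ]
          have h1 : ((n:ℝ)+1) ≠ 0 := by positivity
          have h2 : ((n.factorial : ℝ)) ≠ 0 := Nat.cast_ne_zero.2 n.factorial_ne_zero
          push_cast
          field_simp
          ring
      _ ≤ ENNReal.ofReal (L/(n+1)) * volume P := mul_le_mul_right hP _
      _ ≤ volume K := hmain

end Aux

/-- the sharp isoperimetric inequality for billiards in the `ℓ₁`-norm:
`ξ_{□ₙ}(K)ⁿ ≤ 2ⁿ · n! · volₙ(K)` with `□ₙ = [-1,1]ⁿ`. -/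
theorem billiard_isoperimetric_l1 (n : ℕ)
    (K : Set (EuclideanSpace ℝ (Fin n))) (hK : IsConvexBody K) :
    xi { x : EuclideanSpace ℝ (Fin n) | ∀ i, |x i| ≤ 1 } K ^ n
      ≤ 2 ^ n * n.factorial * (volume K).toReal := by
  classical
  obtain ⟨hcomp, hconv, hint⟩ := hK
  have hKne : K.Nonempty := hint.mono interior_subset
  have hvolfin : volume K ≠ ⊤ := hcomp.measure_lt_top.ne
  rcases Nat.eq_zero_or_pos n with hn | hn
  · subst hn
    have hKuniv : K = Set.univ := by
      obtain ⟨x, hx⟩ := hKne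
      ext y
      simp only [Set.mem_univ, iff_true]
      have hyx : y = x := by
        ext j
        exact j.elim0
      rwa [hyx]
    have hvolu : volume (Set.univ : Set (EuclideanSpace ℝ (Fin 0))) = 1 := by
      have hmp := (EuclideanSpace.volume_preserving_symm_measurableEquiv_toLp (Fin 0)).symm
      have h2 := hmp.measure_preimage
        (MeasurableSet.univ (α := EuclideanSpace ℝ (Fin 0))).nullMeasurableSet
      rw [Set.preimage_univ] at h2
      rw [← h2, volume_pi, Measure.pi_univ]
      simp
    rw [pow_zero, hKuniv, hvolu]
    norm_num
  -- main case
  haveI : Nonempty (Fin n) := ⟨⟨0, hn⟩⟩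
  set ee : Fin n → EuclideanSpace ℝ (Fin n) := fun j => EuclideanSpace.single j 1 with heedef
  have hee1 : ∀ j, ‖ee j‖ = 1 := fun j => by simp [heedef]
  set A : Fin n → Set ℝ :=
    fun j => {t : ℝ | 0 ≤ t ∧ ∃ x ∈ K, x + t • EuclideanSpace.single j 1 ∈ K} with hAdef
  have hmemA : ∀ j, sSup (A j) ∈ A j := fun j => chord_exists hcomp hKne j
  have hbddA : ∀ j, BddAbove (A j) := fun j => chord_bddAbove hcomp j
  set Lsup : Fin n → ℝ := fun j => sSup (A j) with hLsupdef
  set L : ℝ := Finset.univ.inf' Finset.univ_nonempty Lsup with hLdef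
  have hL0 : 0 ≤ L := by
    apply Finset.le_inf'
    intro j _
    exact (hmemA j).1
  have hLle : ∀ j, L ≤ Lsup j := fun j => Finset.inf'_le _ (Finset.mem_univ j)
  have hLseg : ∀ j, ∃ x ∈ K, x + L • ee j ∈ K := by
    intro j
    obtain ⟨ht0, x, hx, hx'⟩ := hmemA j
    rcases eq_or_lt_of_le (hLle j) with hEq | hLt
    · exact ⟨x, hx, by rw [hEq]; exact hx'⟩
    · have htpos : 0 < Lsup j := lt_of_le_of_lt hL0 hLt
      set c : ℝ := L / Lsup j with hcdef
      have hc0 : 0 ≤ c := div_nonneg hL0 htpos.le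
      have hc1 : c ≤ 1 := by
        rw [hcdef, div_le_one htpos]
        exact hLle j
      have hcomb : (1 - c) • x + c • (x + Lsup j • ee j) = x + (c * Lsup j) • ee j := by
        rw [smul_add, ← add_assoc, ← add_smul, sub_add_cancel, one_smul, smul_smul]
      have hmem2 : (1 - c) • x + c • (x + Lsup j • ee j) ∈ K :=
        hconv hx hx' (by linarith) hc0 (by ring)
      rw [hcomb] at hmem2
      have hcL : c * Lsup j = L := div_mul_cancel₀ L htpos.ne'
      rw [hcL] at hmem2
      exact ⟨x, hx, hmem2⟩
  obtain ⟨jm, -, hjm⟩ := Finset.exists_mem_eq_inf' (Finset.univ_nonempty (α := Fin n)) Lsup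
  set q : Fin 2 → EuclideanSpace ℝ (Fin n) := ![0, L • ee jm] with hqdef
  have hNotFit : NotFit K q := by
    intro t ht
    have h0 : (0 : EuclideanSpace ℝ (Fin n)) - t ∈ interior K := by
      have := ht 0
      simpa [hqdef] using this
    have h1 : L • ee jm - t ∈ interior K := by
      have := ht 1
      simpa [hqdef] using this
    obtain ⟨r, hr, hball⟩ := Metric.isOpen_iff.1 isOpen_interior _ h1
    have hw : L • ee jm - t + (r/2) • ee jm ∈ interior K := by
      apply hball
      rw [Metric.mem_ball, dist_eq_norm]
      have heq : L • ee jm - t + (r/2) • ee jm - (L • ee jm - t) = (r/2) • ee jm := by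
        abel
      rw [heq, norm_smul, hee1 jm]
      rw [Real.norm_eq_abs, abs_of_nonneg (by linarith : (0:ℝ) ≤ r/2)]
      linarith
    have hmem2 : L + r/2 ∈ A jm := by
      refine ⟨by linarith, -t, ?_, ?_⟩
      · have : (0 : EuclideanSpace ℝ (Fin n)) - t = -t := by abel
        rw [← this]
        exact interior_subset h0
      · have heq2 : -t + (L + r/2) • (EuclideanSpace.single jm 1 : EuclideanSpace ℝ (Fin n))
            = L • ee jm - t + (r/2) • ee jm := by
          rw [heedef]
          rw [add_smul]
          abel
        rw [heq2]
        exact interior_subset hw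
    have hle2 := le_csSup (hbddA jm) hmem2
    have hfinal : L + r/2 ≤ L := by
      calc L + r/2 ≤ sSup (A jm) := hle2
        _ = Lsup jm := rfl
        _ = L := by rw [hLdef]; exact hjm.symm
    linarith
  have hpoly : polyLen { x : EuclideanSpace ℝ (Fin n) | ∀ i, |x i| ≤ 1 } q = 2 * L := by
    have hc0 : cyc (0 : Fin 2) = 1 := rfl
    have hc1 : cyc (1 : Fin 2) = 0 := rfl
    have hunfold : polyLen { x : EuclideanSpace ℝ (Fin n) | ∀ i, |x i| ≤ 1 } q
        = ∑ i : Fin 2, suppNorm { x : EuclideanSpace ℝ (Fin n) | ∀ i, |x i| ≤ 1 }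
            (q (cyc i) - q i) := rfl
    rw [hunfold, Fin.sum_univ_two, hc0, hc1]
    have e1 : q 1 - q 0 = L • ee jm := by simp [hqdef]
    have e2 : q 0 - q 1 = -(L • ee jm) := by simp [hqdef]
    rw [e1, e2, suppNorm_box, suppNorm_box]
    have habs : ∀ i, |(L • ee jm) i| = if i = jm then L else 0 := by
      intro i
      rcases eq_or_ne i jm with h | h
      · subst h
        simp [heedef, EuclideanSpace.single_apply, abs_of_nonneg hL0]
      · simp [heedef, EuclideanSpace.single_apply, h]
    have hsum : (∑ i, |(L • ee jm) i|) = L := by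
      simp_rw [habs]
      simp
    have hsum2 : (∑ i, |(-(L • ee jm)) i|) = L := by
      have : ∀ i, |(-(L • ee jm)) i| = |(L • ee jm) i| := by
        intro i
        have : (-(L • ee jm)) i = -((L • ee jm) i) := rfl
        rw [this, abs_neg]
      simp_rw [this]
      exact hsum
    rw [hsum, hsum2]
    ring
  set XS := { Ll : ℝ | ∃ m : ℕ, 2 ≤ m ∧ ∃ q : Fin m → EuclideanSpace ℝ (Fin n),
    NotFit K q ∧ Ll = polyLen { x : EuclideanSpace ℝ (Fin n) | ∀ i, |x i| ≤ 1 } q } with hXSdef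
  have hmemXS : (2*L) ∈ XS := ⟨2, le_refl 2, q, hNotFit, hpoly.symm⟩
  have hXSnonneg : ∀ r ∈ XS, (0:ℝ) ≤ r := by
    rintro r ⟨m, hm, q', hq', rfl⟩
    have hunfold : polyLen { x : EuclideanSpace ℝ (Fin n) | ∀ i, |x i| ≤ 1 } q'
        = ∑ i : Fin m, suppNorm { x : EuclideanSpace ℝ (Fin n) | ∀ i, |x i| ≤ 1 }
            (q' (cyc i) - q' i) := rfl
    rw [hunfold]
    apply Finset.sum_nonneg
    intro i _
    rw [suppNorm_box]
    exact Finset.sum_nonneg fun _ _ => abs_nonneg _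
  have hxieq : xi { x : EuclideanSpace ℝ (Fin n) | ∀ i, |x i| ≤ 1 } K = sInf XS := rfl
  have hxile : xi { x : EuclideanSpace ℝ (Fin n) | ∀ i, |x i| ≤ 1 } K ≤ 2*L := by
    rw [hxieq]
    exact csInf_le ⟨0, fun r hr => hXSnonneg r hr⟩ hmemXS
  have hxi0 : 0 ≤ xi { x : EuclideanSpace ℝ (Fin n) | ∀ i, |x i| ≤ 1 } K := by
    rw [hxieq]
    exact le_csInf ⟨2*L, hmemXS⟩ hXSnonneg
  -- transfer to the pi world and apply the segment lemma
  set ce := EuclideanSpace.equiv (Fin n) ℝ with hcedef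
  set K' : Set (Fin n → ℝ) := ⇑ce '' K with hK'def
  have hK'vol : volume K' = volume K := by
    have hmp := EuclideanSpace.volume_preserving_symm_measurableEquiv_toLp (Fin n)
    have hKmeas' : MeasurableSet K' := by
      have h0 : K' = ⇑((MeasurableEquiv.toLp 2 (Fin n → ℝ)).symm) '' K := rfl
      rw [h0]
      exact ((MeasurableEquiv.toLp 2 (Fin n → ℝ)).symm).measurableSet_image.2
        hcomp.isClosed.measurableSet
    have h2 := hmp.measure_preimage hKmeas'.nullMeasurableSet
    have h3 : ⇑((MeasurableEquiv.toLp 2 (Fin n → ℝ)).symm) ⁻¹' K' = K := by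
      have h4 : ⇑((MeasurableEquiv.toLp 2 (Fin n → ℝ)).symm) = ⇑ce := rfl
      rw [h4, hK'def]
      exact Set.preimage_image_eq _ (EquivLike.injective ce)
    rw [h3] at h2
    exact h2.symm
  have hK'conv : Convex ℝ K' := hconv.linear_image (ce.toLinearEquiv.toLinearMap)
  have hK'comp : IsCompact K' := hcomp.image ce.continuous
  have hK'ne : K'.Nonempty := hKne.image _
  have hK'seg : ∀ j : Fin n, ∃ x, x ∈ K' ∧ x + L • (Pi.single j 1 : Fin n → ℝ) ∈ K' := by
    intro j
    obtain ⟨x, hx, hx'⟩ := hLseg j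
    refine ⟨ce x, ⟨x, hx, rfl⟩, ⟨x + L • ee j, hx', ?_⟩⟩
    have h6 : ce (ee j) = Pi.single j 1 := by
      funext i
      have h5 : ce (ee j) i = (ee j) i := rfl
      rw [h5, heedef]
      simp [EuclideanSpace.single_apply, Pi.single_apply]
    rw [map_add, ce.map_smul, h6]
  have hsegvol := segLemma n L hL0 K' hK'conv hK'comp hK'ne hK'seg
  rw [hK'vol] at hsegvol
  have hvol2 : L^n / n.factorial ≤ (volume K).toReal :=
    (ENNReal.ofReal_le_iff_le_toReal hvolfin).1 hsegvol
  have hfacpos : (0:ℝ) < n.factorial := by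
    exact_mod_cast n.factorial_pos
  have h5 : L^n ≤ n.factorial * (volume K).toReal := by
    rw [div_le_iff₀ hfacpos] at hvol2
    linarith
  calc xi { x : EuclideanSpace ℝ (Fin n) | ∀ i, |x i| ≤ 1 } K ^ n
      ≤ (2*L)^n := pow_le_pow_left₀ hxi0 hxile n
    _ = 2^n * L^n := mul_pow 2 L n
    _ ≤ 2^n * (n.factorial * (volume K).toReal) := by
        apply mul_le_mul_of_nonneg_left h5
        positivity
    _ = 2^n * n.factorial * (volume K).toReal := by ring
end

section
/- Let n ≥ 2 and let L ⊂ ℝ^{n−1} be a convex body with 0 ∈ int L. Suppose that for every convex body M ⊂ ℝ^{n−1} one has vol_{n−1}(M) · vol_{n−1}(L) ≥ ξ_L(M)^{n−1} / (n−1)!. Then for every convex body K ⊂ ℝⁿ one has volₙ(K) · volₙ(L × [−1,1]) ≥ ξ_{L×[−1,1]}(K)ⁿ / n!, where L × [−1,1] ⊂ ℝ^{n−1} × ℝ = ℝⁿ. -/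
open scoped BigOperators Pointwise RealInnerProductSpace
open MeasureTheory

/-- The Lagrangian-product body `L × [-1,1] ⊆ ℝ^{m} × ℝ = ℝ^{m+1}`. -/
def prodSeg {m : ℕ} (L : Set (EuclideanSpace ℝ (Fin m))) :
    Set (EuclideanSpace ℝ (Fin (m + 1))) :=
  { x | (show EuclideanSpace ℝ (Fin m) from WithLp.toLp 2 fun i => x i.castSucc) ∈ L ∧
        |x (Fin.last m)| ≤ 1 }

----------------------------------------------------------------
-- AUX
----------------------------------------------------------------
noncomputable section
namespace VAS

open Finset

variable {m : ℕ}

abbrev Em (d : ℕ) := EuclideanSpace ℝ (Fin d)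

def proj (x : Em (m+1)) : Em m := WithLp.toLp 2 fun i => x i.castSucc

def lift (y : Em m) (s : ℝ) : Em (m+1) :=
  WithLp.toLp 2 (Fin.snoc (α := fun _ : Fin (m+1) => ℝ) (fun i => y i) s)

@[simp] lemma proj_lift (y : Em m) (s : ℝ) : proj (lift y s) = y := by
  ext i; simp [proj, lift]

@[simp] lemma lift_last (y : Em m) (s : ℝ) : lift y s (Fin.last m) = s := by
  simp [lift]

@[simp] lemma lift_castSucc (y : Em m) (s : ℝ) (i : Fin m) :
    lift y s i.castSucc = y i := by simp [lift]

lemma lift_sub (y y' : Em m) (s s' : ℝ) :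
    lift y s - lift y' s' = lift (y - y') (s - s') := by
  ext j
  refine Fin.lastCases ?_ (fun i => ?_) j
  · show lift y s (Fin.last m) - lift y' s' (Fin.last m) = _
    simp
  · show lift y s i.castSucc - lift y' s' i.castSucc = _
    simp

lemma mem_prodSeg {L : Set (Em m)} {x : Em (m+1)} :
    x ∈ prodSeg L ↔ proj x ∈ L ∧ |x (Fin.last m)| ≤ 1 := Iff.rfl

lemma inner_split (p q : Em (m+1)) :
    ⟪p, q⟫ = ⟪proj p, proj q⟫ + p (Fin.last m) * q (Fin.last m) := by
  simp only [PiLp.inner_apply, RCLike.inner_apply, starRingEnd_apply, star_trivial]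
  rw [Fin.sum_univ_castSucc]
  simp only [proj, PiLp.toLp_apply]
  ring


lemma bddAbove_innerImage {d : ℕ} {T : Set (Em d)} (hT : Bornology.IsBounded T)
    (q : Em d) : BddAbove ((fun p : Em d => ⟪p, q⟫) '' T) := by
  obtain ⟨C, hC⟩ := hT.exists_norm_le
  refine ⟨C * ‖q‖, ?_⟩
  rintro x ⟨p, hp, rfl⟩
  calc ⟪p, q⟫ ≤ ‖p‖ * ‖q‖ := real_inner_le_norm p q
    _ ≤ C * ‖q‖ := mul_le_mul_of_nonneg_right (hC p hp) (norm_nonneg q)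

lemma suppNorm_nonneg {d : ℕ} {T : Set (Em d)} (hT : Bornology.IsBounded T)
    (h0 : (0 : Em d) ∈ T) (q : Em d) : 0 ≤ suppNorm T q := by
  have h : (0:ℝ) ∈ (fun p : Em d => ⟪p, q⟫) '' T := ⟨0, h0, by simp⟩
  exact le_csSup (bddAbove_innerImage hT q) h

lemma polyLen_nonneg {d : ℕ} {T : Set (Em d)} (hT : Bornology.IsBounded T)
    (h0 : (0 : Em d) ∈ T) {k : ℕ} (q : Fin k → Em d) : 0 ≤ polyLen T q :=
  Finset.sum_nonneg fun i _ => suppNorm_nonneg hT h0 _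

lemma xi_nonneg {d : ℕ} {T K : Set (Em d)} (hT : Bornology.IsBounded T)
    (h0 : (0 : Em d) ∈ T) : 0 ≤ xi T K := by
  apply Real.sInf_nonneg
  rintro x ⟨k, hk, q, hq, rfl⟩
  exact polyLen_nonneg hT h0 q

lemma xi_le_polyLen {d : ℕ} {T K : Set (Em d)} (hT : Bornology.IsBounded T)
    (h0 : (0 : Em d) ∈ T) {k : ℕ} (hk : 2 ≤ k) (q : Fin k → Em d)
    (hq : NotFit K q) : xi T K ≤ polyLen T q := by
  apply csInf_le
  · exact ⟨0, by rintro x ⟨k', hk', q', hq', rfl⟩; exact polyLen_nonneg hT h0 q'⟩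
  · exact ⟨k, hk, q, hq, rfl⟩

lemma suppNorm_lift_horiz (L : Set (Em m)) (u : Em m) :
    suppNorm (prodSeg L) (lift u 0) = suppNorm L u := by
  unfold suppNorm
  congr 1
  ext r
  constructor
  · rintro ⟨p, hp, rfl⟩
    refine ⟨proj p, hp.1, ?_⟩
    show ⟪proj p, u⟫ = ⟪p, lift u 0⟫
    rw [inner_split p (lift u 0)]; simp
  · rintro ⟨a, ha, rfl⟩
    refine ⟨lift a 0, ⟨by simpa using ha, by simp⟩, ?_⟩
    show ⟪lift a 0, lift u 0⟫ = ⟪a, u⟫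
    rw [inner_split]; simp

lemma suppNorm_vert {L : Set (Em m)} {x₀ : Em m} (hx₀ : x₀ ∈ L) (t : ℝ) :
    suppNorm (prodSeg L) (lift 0 t) = |t| := by
  apply IsGreatest.csSup_eq
  constructor
  · refine ⟨lift x₀ (if 0 ≤ t then 1 else -1), ⟨by simpa using hx₀, by split <;> norm_num⟩, ?_⟩
    show ⟪lift x₀ (if 0 ≤ t then 1 else -1), lift 0 t⟫ = |t|
    rw [inner_split]
    split
    · simp [abs_of_nonneg, *]
    · rename_i h
      simp only [inner_zero_right, proj_lift, lift_last, zero_add]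
      rw [abs_of_neg (by linarith)]; ring
  · rintro r ⟨p, hp, rfl⟩
    show ⟪p, lift 0 t⟫ ≤ |t|
    rw [inner_split]
    simp only [inner_zero_right, proj_lift, lift_last, zero_add]
    calc p (Fin.last m) * t ≤ |p (Fin.last m) * t| := le_abs_self _
      _ = |p (Fin.last m)| * |t| := abs_mul _ _
      _ ≤ 1 * |t| := mul_le_mul_of_nonneg_right hp.2 (abs_nonneg t)
      _ = |t| := one_mul _

lemma lift_eq_single (s : ℝ) : lift (0 : Em m) s = EuclideanSpace.single (Fin.last m) s := by
  ext j
  refine Fin.lastCases ?_ (fun i => ?_) j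
  · simp [EuclideanSpace.single_apply]
  · simp [EuclideanSpace.single_apply, (Fin.castSucc_lt_last i).ne]

lemma lift_decomp (y : Em m) (s : ℝ) : lift y s = lift y 0 + lift 0 s := by
  ext j
  refine Fin.lastCases ?_ (fun i => ?_) j
  · show _ = lift y 0 (Fin.last m) + lift 0 s (Fin.last m)
    simp
  · show _ = lift y 0 i.castSucc + lift 0 s i.castSucc
    simp

lemma norm_lift_zero (y : Em m) : ‖lift y 0‖ = ‖y‖ := by
  rw [EuclideanSpace.norm_eq, EuclideanSpace.norm_eq]
  congr 1
  rw [Fin.sum_univ_castSucc]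
  simp

lemma norm_lift_le (y : Em m) (s : ℝ) : ‖lift y s‖ ≤ ‖y‖ + |s| := by
  rw [lift_decomp]
  refine (norm_add_le _ _).trans ?_
  rw [norm_lift_zero, lift_eq_single, EuclideanSpace.norm_single, Real.norm_eq_abs]

lemma isBounded_prodSeg {L : Set (Em m)} (hL : Bornology.IsBounded L) :
    Bornology.IsBounded (prodSeg L) := by
  obtain ⟨C, hC⟩ := hL.exists_norm_le
  rw [isBounded_iff_forall_norm_le]
  refine ⟨C + 1, fun x hx => ?_⟩
  have hx' : x = lift (proj x) (x (Fin.last m)) := by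
    ext j
    refine Fin.lastCases ?_ (fun i => ?_) j <;> simp [proj]
  rw [hx']
  exact (norm_lift_le _ _).trans (add_le_add (hC _ hx.1) hx.2)

lemma zero_mem_prodSeg {L : Set (Em m)} (h0 : (0 : Em m) ∈ L) :
    (0 : Em (m+1)) ∈ prodSeg L := by
  constructor
  · show proj 0 ∈ L
    convert h0
    ext i; simp [proj]
  · norm_num

def projL : Em (m+1) →ₗ[ℝ] Em m where
  toFun := proj
  map_add' := fun _ _ => rfl
  map_smul' := fun _ _ => rfl

def projCL : Em (m+1) →L[ℝ] Em m := LinearMap.toContinuousLinearMap projL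

@[simp] lemma projCL_apply (x : Em (m+1)) : projCL x = proj x := rfl

lemma proj_surjective : Function.Surjective (proj : Em (m+1) → Em m) :=
  fun y => ⟨lift y 0, proj_lift y 0⟩

lemma proj_isOpenMap : IsOpenMap (proj : Em (m+1) → Em m) := by
  have : IsOpenMap (projCL : Em (m+1) →L[ℝ] Em m) :=
    ContinuousLinearMap.isOpenMap projCL proj_surjective
  exact this

lemma proj_continuous : Continuous (proj : Em (m+1) → Em m) := projCL.continuous

lemma proj_sub (a b : Em (m+1)) : proj (a - b) = proj a - proj b := map_sub projL a b

lemma notFit_lift {K : Set (Em (m+1))} {k : ℕ} {q : Fin k → Em m}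
    (hq : NotFit (proj '' K) q) (s : ℝ) : NotFit K (fun i => lift (q i) s) := by
  intro t ht
  apply hq (proj t)
  intro i
  have h1 : proj (lift (q i) s - t) ∈ proj '' interior K := ⟨_, ht i, rfl⟩
  have h2 : proj (lift (q i) s - t) = q i - proj t := by rw [proj_sub, proj_lift]
  rw [h2] at h1
  exact proj_isOpenMap.image_interior_subset K h1

lemma polyLen_lift (L : Set (Em m)) {k : ℕ} (q : Fin k → Em m) (s : ℝ) :
    polyLen (prodSeg L) (fun i => lift (q i) s) = polyLen L q := by
  unfold polyLen
  refine Finset.sum_congr rfl fun i _ => ?_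
  rw [lift_sub, sub_self, suppNorm_lift_horiz]

lemma exists_notFit {d : ℕ} (hd : 0 < d) {K : Set (Em d)} (hK : Bornology.IsBounded K) :
    ∃ q : Fin 2 → Em d, NotFit K q := by
  obtain ⟨C, hC⟩ := hK.exists_norm_le
  refine ⟨![0, EuclideanSpace.single ⟨0, hd⟩ (2*C+1)], fun t ht => ?_⟩
  have h0 : (0 : Em d) - t ∈ K := interior_subset (ht 0)
  have h1 : EuclideanSpace.single ⟨0, hd⟩ (2*C+1) - t ∈ K := interior_subset (ht 1)
  have hC0 : 0 ≤ C := le_trans (norm_nonneg _) (hC _ h0)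
  have : ‖EuclideanSpace.single (⟨0, hd⟩ : Fin d) (2*C+1)‖ ≤ 2*C := by
    have : EuclideanSpace.single (⟨0, hd⟩ : Fin d) (2*C+1)
        = (EuclideanSpace.single (⟨0, hd⟩ : Fin d) (2*C+1) - t) - ((0 : Em d) - t) := by abel
    rw [this]
    calc ‖_ - _‖ ≤ ‖_‖ + ‖_‖ := norm_sub_le _ _
      _ ≤ C + C := add_le_add (hC _ h1) (hC _ h0)
      _ = 2*C := by ring
  rw [EuclideanSpace.norm_single, Real.norm_eq_abs] at this
  have : 2*C+1 ≤ 2*C := le_trans (le_abs_self _) this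
  linarith

lemma cyc_zero_fin2 : cyc (0 : Fin 2) = 1 := rfl
lemma cyc_one_fin2 : cyc (1 : Fin 2) = 0 := rfl

lemma polyLen_pair {d : ℕ} (T : Set (Em d)) (a b : Em d) :
    polyLen T ![a, b] = suppNorm T (b - a) + suppNorm T (a - b) := by
  unfold polyLen
  rw [Fin.sum_univ_two, cyc_zero_fin2, cyc_one_fin2]
  norm_num

lemma lift_neg (y : Em m) (s : ℝ) : -lift y s = lift (-y) (-s) := by
  ext j
  refine Fin.lastCases ?_ (fun i => ?_) j
  · show -(lift y s (Fin.last m)) = _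
    simp
  · show -(lift y s i.castSucc) = _
    simp

lemma exists_chord {L : Set (Em m)} {K : Set (Em (m+1))}
    (hLb : Bornology.IsBounded L) (hL0 : (0 : Em m) ∈ L)
    {d : ℝ} (hd : 0 < d) (hlt : 2 * d < xi (prodSeg L) K) :
    ∃ x : Em (m+1), x ∈ K ∧ x + lift 0 d ∈ K := by
  by_contra hcon
  push_neg at hcon
  have hnf : NotFit K ![0, lift 0 d] := by
    intro t ht
    refine hcon (0 - t) (interior_subset (ht 0)) ?_
    have : (0 : Em (m+1)) - t + lift 0 d = lift 0 d - t := by abel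
    rw [this]
    exact interior_subset (ht 1)
  have hb := isBounded_prodSeg hLb
  have h0 := zero_mem_prodSeg hL0
  have hle := xi_le_polyLen hb h0 (le_refl 2) _ hnf
  rw [polyLen_pair, sub_zero, zero_sub, lift_neg, neg_zero] at hle
  rw [suppNorm_vert hL0, suppNorm_vert hL0] at hle
  rw [abs_of_pos hd, abs_of_neg (neg_lt_zero.mpr hd)] at hle
  linarith

lemma isConvexBody_proj {K : Set (Em (m+1))} (hK : IsConvexBody K) :
    IsConvexBody (proj '' K) := by
  obtain ⟨hc, hv, hi⟩ := hK
  refine ⟨hc.image proj_continuous, hv.linear_image projL, ?_⟩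
  obtain ⟨x, hx⟩ := hi
  exact ⟨proj x, proj_isOpenMap.image_interior_subset K ⟨x, hx, rfl⟩⟩

lemma xi_le_xi_proj (hm : 1 ≤ m) {L : Set (Em m)} {K : Set (Em (m+1))}
    (hLb : Bornology.IsBounded L) (hL0 : (0 : Em m) ∈ L)
    (hPb : Bornology.IsBounded (proj '' K)) :
    xi (prodSeg L) K ≤ xi L (proj '' K) := by
  apply le_csInf
  · obtain ⟨q, hq⟩ := exists_notFit hm hPb
    exact ⟨_, 2, le_refl 2, q, hq, rfl⟩
  · rintro b ⟨k, hk, q, hq, rfl⟩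
    have h1 := xi_le_polyLen (isBounded_prodSeg hLb) (zero_mem_prodSeg hL0) hk
      (fun i => lift (q i) 0) (notFit_lift hq 0)
    rwa [polyLen_lift] at h1

lemma lift_smul (c : ℝ) (y : Em m) (s : ℝ) : c • lift y s = lift (c • y) (c * s) := by
  ext j
  refine Fin.lastCases ?_ (fun i => ?_) j
  · show c • (lift y s (Fin.last m)) = _
    simp
  · show c • (lift y s i.castSucc) = _
    simp

/-- The chord: all intermediate points are in `K`. -/
lemma chord_mem {K : Set (Em (m+1))} (hconv : Convex ℝ K) {d : ℝ} (hd : 0 < d)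
    {x : Em (m+1)} (hx : x ∈ K) (hx2 : x + lift 0 d ∈ K) {τ : ℝ}
    (hτ : τ ∈ Set.Icc 0 d) : x + lift 0 τ ∈ K := by
  have h := hconv hx hx2 (a := 1 - τ/d) (b := τ/d)
    (by rw [sub_nonneg]; exact div_le_one_of_le₀ hτ.2 hd.le)
    (div_nonneg hτ.1 hd.le) (by ring)
  have he : (1 - τ/d) • x + (τ/d) • (x + lift 0 d) = x + lift 0 τ := by
    rw [smul_add, lift_smul, smul_zero, div_mul_cancel₀ _ hd.ne']
    rw [← add_assoc, ← add_smul]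
    norm_num
  rwa [he] at h

----------------------------------------------------------------
-- Measure-theoretic transfer
----------------------------------------------------------------

def Tm (m : ℕ) : Em (m+1) ≃ᵐ ((Fin m → ℝ) × ℝ) :=
  (((MeasurableEquiv.toLp 2 (Fin (m+1) → ℝ)).symm).trans
    (MeasurableEquiv.piFinSuccAbove (fun _ => ℝ) (Fin.last m))).trans
    MeasurableEquiv.prodComm

lemma Tm_apply (x : Em (m+1)) :
    Tm m x = (fun i => x i.castSucc, x (Fin.last m)) := by
  have h : (Fin.last m).succAbove = Fin.castSucc := Fin.succAbove_last
  show (fun j => x ((Fin.last m).succAbove j), x (Fin.last m)) = _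
  rw [h]

lemma Tm_pres : MeasurePreserving (Tm m) volume volume := by
  have h1 := EuclideanSpace.volume_preserving_symm_measurableEquiv_toLp (Fin (m+1))
  have h2 := volume_preserving_piFinSuccAbove (fun _ : Fin (m+1) => ℝ) (Fin.last m)
  have h3 : MeasurePreserving
      (MeasurableEquiv.prodComm : ℝ × (Fin m → ℝ) ≃ᵐ ((Fin m → ℝ) × ℝ))
      volume volume := by
    have := MeasureTheory.Measure.measurePreserving_swap
      (μ := (volume : Measure ℝ)) (ν := (volume : Measure (Fin m → ℝ)))
    rw [Measure.volume_eq_prod, Measure.volume_eq_prod]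
    exact this
  have := (h3.comp (h2.comp h1))
  exact this

lemma measEquiv_symm_apply {d : ℕ} (y : Fin d → ℝ) :
    ((MeasurableEquiv.toLp 2 (Fin d → ℝ)).symm).symm y = WithLp.toLp 2 y := by
  rfl

/-- transfer of the volume of a set in `Em d` to the pi-type volume. -/
lemma volume_transfer {d : ℕ} {S : Set (Em d)} (hS : MeasurableSet S) :
    volume (((MeasurableEquiv.toLp 2 (Fin d → ℝ)).symm).symm ⁻¹' S) = volume S := by
  have h := (EuclideanSpace.volume_preserving_symm_measurableEquiv_toLp (Fin d)).symm
  exact h.measure_preimage hS.nullMeasurableSet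

lemma volume_prodSeg_eq {L : Set (Em m)} (hL : IsCompact L) :
    volume (prodSeg L) = 2 * volume L := by
  set e := (MeasurableEquiv.toLp 2 (Fin m → ℝ)).symm
  set Lp : Set (Fin m → ℝ) := e.symm ⁻¹' L with hLp
  have hLm : MeasurableSet L := hL.measurableSet
  have hLpm : MeasurableSet Lp := e.symm.measurable hLm
  have hset : prodSeg L = Tm m ⁻¹' (Lp ×ˢ Set.Icc (-1) 1) := by
    ext x
    rw [Set.mem_preimage, Tm_apply]
    constructor
    · rintro ⟨h1, h2⟩
      constructor
      · show e.symm _ ∈ L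
        rw [measEquiv_symm_apply]
        exact h1
      · exact abs_le.mp h2
    · rintro ⟨h1, h2⟩
      have h1' : e.symm (fun i => x i.castSucc) ∈ L := h1
      rw [measEquiv_symm_apply] at h1'
      exact ⟨h1', abs_le.mpr h2⟩
  rw [hset, Tm_pres.measure_preimage (hLpm.prod measurableSet_Icc).nullMeasurableSet]
  rw [Measure.volume_eq_prod, Measure.prod_prod, volume_transfer hLm, Real.volume_Icc]
  rw [mul_comm]
  norm_num

lemma abel_id (b : ℕ → ℝ) (N : ℕ) :
    ∑ k ∈ Finset.range N, (k : ℝ) * (b k - b (k+1))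
      = (∑ k ∈ Finset.range N, b (k+1)) - N * b N := by
  induction N with
  | zero => simp
  | succ n ih =>
    rw [Finset.sum_range_succ, Finset.sum_range_succ (fun k => b (k+1)), ih]
    push_cast
    ring

lemma sum_pow_lb (m : ℕ) (M : ℕ) :
    ((M : ℝ) ^ (m+1)) / (m+1) ≤ ∑ j ∈ Finset.range (M+1), (j : ℝ) ^ m := by
  induction M with
  | zero =>
    simp only [Nat.cast_zero]
    rw [zero_pow (Nat.succ_ne_zero m), zero_div, Finset.sum_range_one]
    positivity
  | succ n ih =>
    rw [Finset.sum_range_succ]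
    have key : ((n:ℝ)+1) ^ (m+1) - (n:ℝ) ^ (m+1) ≤ (m+1) * ((n:ℝ)+1) ^ m := by
      have hg := geom_sum₂_mul ((n:ℝ)+1) (n:ℝ) (m+1)
      have hsum : (∑ i ∈ Finset.range (m+1), ((n:ℝ)+1) ^ i * (n:ℝ) ^ (m - i))
          ≤ (m+1) * ((n:ℝ)+1) ^ m := by
        calc (∑ i ∈ Finset.range (m+1), ((n:ℝ)+1) ^ i * (n:ℝ) ^ (m - i))
            ≤ ∑ i ∈ Finset.range (m+1), ((n:ℝ)+1) ^ m := by
              apply Finset.sum_le_sum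
              intro i hi
              rw [Finset.mem_range] at hi
              calc ((n:ℝ)+1) ^ i * (n:ℝ) ^ (m - i)
                  ≤ ((n:ℝ)+1) ^ i * ((n:ℝ)+1) ^ (m - i) := by
                    apply mul_le_mul_of_nonneg_left _ (by positivity)
                    exact pow_le_pow_left₀ (by positivity) (by linarith) _
                _ = ((n:ℝ)+1) ^ (i + (m - i)) := (pow_add _ _ _).symm
                _ = ((n:ℝ)+1) ^ m := by
                    congr 1
                    omega
          _ = (m+1) * ((n:ℝ)+1) ^ m := by
              rw [Finset.sum_const, Finset.card_range]
              push_cast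
              ring
      have hmul : (∑ i ∈ Finset.range (m+1), ((n:ℝ)+1) ^ i * (n:ℝ) ^ (m+1-1-i))
          * (((n:ℝ)+1) - (n:ℝ)) = ((n:ℝ)+1) ^ (m+1) - (n:ℝ) ^ (m+1) := hg
      simp only [Nat.add_sub_cancel] at hmul
      rw [show ((n:ℝ)+1) - (n:ℝ) = 1 by ring, mul_one] at hmul
      rw [← hmul]
      exact hsum
    have hm1 : (0:ℝ) < (m:ℝ)+1 := by positivity
    push_cast
    rw [div_le_iff₀ hm1] at ih ⊢
    nlinarith [key]

lemma prism_bound (hm : 1 ≤ m) {KP : Set ((Fin m → ℝ) × ℝ)}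
    (hconv : Convex ℝ KP) (hcomp : IsCompact KP)
    {y₀ : Fin m → ℝ} {c₀ d : ℝ} (hd : 0 < d)
    (hch : ∀ τ ∈ Set.Icc (0:ℝ) d, (y₀, c₀ + τ) ∈ KP) :
    ENNReal.ofReal (d * (volume (Prod.fst '' KP)).toReal / ((m:ℝ)+1)) ≤ volume KP := by
  have hKPm : MeasurableSet KP := hcomp.measurableSet
  set P : Set (Fin m → ℝ) := Prod.fst '' KP with hPdef
  have hPcomp : IsCompact P := hcomp.image continuous_fst
  have hPconv : Convex ℝ P := hconv.linear_image (LinearMap.fst ℝ _ _)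
  have hy₀ : y₀ ∈ P := by
    have h := hch 0 ⟨le_refl 0, hd.le⟩
    rw [add_zero] at h
    exact ⟨_, h, rfl⟩
  have hPfin : volume P ≠ ⊤ := hPcomp.measure_lt_top.ne
  have hKfin : volume KP ≠ ⊤ := hcomp.measure_lt_top.ne
  set v : ℝ := (volume P).toReal with hv
  have hv0 : 0 ≤ v := ENNReal.toReal_nonneg
  set f : (Fin m → ℝ) → ENNReal := fun y => volume (Prod.mk y ⁻¹' KP) with hf
  have hfmeas : Measurable f := measurable_measure_prodMk_left hKPm
  have hfub : volume KP = ∫⁻ y, f y := by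
    rw [Measure.volume_eq_prod, Measure.prod_apply hKPm]
  set Q : ℝ → Set (Fin m → ℝ) := fun u => (fun y => y₀ + (1-u) • (y - y₀)) '' P with hQ
  have hQcomp : ∀ u, IsCompact (Q u) := by
    intro u
    apply hPcomp.image
    exact continuous_const.add ((continuous_id.sub continuous_const).const_smul (1-u))
  have hQvol : ∀ u, 0 ≤ u → u ≤ 1 → volume (Q u) = ENNReal.ofReal ((1-u)^m * v) := by
    intro u h0 h1
    have hfun : (fun y : Fin m → ℝ => y₀ + (1-u) • (y - y₀))
        = (fun z => y₀ +ᵥ z) ∘ ((fun z : Fin m → ℝ => (1-u) • z) ∘ (fun y => -y₀ +ᵥ y)) := by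
      funext y
      show y₀ + (1-u) • (y - y₀) = y₀ +ᵥ ((1-u) • (-y₀ +ᵥ y))
      rw [vadd_eq_add, vadd_eq_add, neg_add_eq_sub]
    show volume ((fun y : Fin m → ℝ => y₀ + (1-u) • (y - y₀)) '' P) = _
    rw [hfun, Set.image_comp, Set.image_comp, Set.image_vadd, Set.image_smul, Set.image_vadd,
      measure_vadd, Measure.addHaar_smul, measure_vadd, Module.finrank_pi, Fintype.card_fin,
      abs_of_nonneg (pow_nonneg (by linarith) m),
      ENNReal.ofReal_mul (pow_nonneg (by linarith) m), hv,
      ENNReal.ofReal_toReal hPfin]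
  have hQsub : ∀ u u', 0 ≤ u → u ≤ u' → u' ≤ 1 → Q u' ⊆ Q u := by
    intro u u' h0 h01 h1
    by_cases hu1 : u = 1
    · have h2 : u' = 1 := le_antisymm h1 (hu1 ▸ h01)
      rw [hu1, h2]
    have hu1' : u < 1 := lt_of_le_of_ne (le_trans h01 h1) hu1
    rintro _ ⟨y', hy', rfl⟩
    set r := (1-u')/(1-u) with hr
    have hden : (0:ℝ) < 1 - u := by linarith
    have hr0 : 0 ≤ r := div_nonneg (by linarith) hden.le
    have hr1 : r ≤ 1 := div_le_one_of_le₀ (by linarith) hden.le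
    refine ⟨(1-r) • y₀ + r • y', hPconv hy₀ hy' (by linarith) hr0 (by ring), ?_⟩
    show y₀ + (1-u) • ((1-r) • y₀ + r • y' - y₀) = y₀ + (1-u') • (y' - y₀)
    have h3 : (1-r) • y₀ + r • y' - y₀ = r • (y' - y₀) := by module
    rw [h3, smul_smul]
    have h4 : (1-u) * r = 1 - u' := by
      rw [hr, mul_div_cancel₀ _ hden.ne']
    rw [h4]
  have hfQ : ∀ u, 0 ≤ u → u ≤ 1 → ∀ y ∈ Q u, ENNReal.ofReal (u * d) ≤ f y := by
    intro u h0 h1 y hy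
    rcases eq_or_lt_of_le h0 with h0'|h0'
    · rw [← h0', zero_mul, ENNReal.ofReal_zero]
      exact bot_le
    obtain ⟨y', hy'P, rfl⟩ := hy
    obtain ⟨⟨y'', s'⟩, hz', hfst⟩ := hy'P
    simp only at hfst
    subst hfst
    set a := u * c₀ + (1-u) * s' with ha
    have hu' : u ≠ 0 := h0'.ne'
    have hsub : Set.Icc a (a + u*d) ⊆ Prod.mk (y₀ + (1-u) • (y'' - y₀)) ⁻¹' KP := by
      intro s hs
      have hτ : (s - a)/u ∈ Set.Icc (0:ℝ) d := by
        constructor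
        · exact div_nonneg (by linarith [hs.1]) h0'.le
        · rw [div_le_iff₀ h0']
          nlinarith [hs.2]
      have hzk := hch _ hτ
      have hcomb := hconv hzk hz' (a := u) (b := 1-u) h0'.le (by linarith) (by ring)
      have heq : u • ((y₀, c₀ + (s-a)/u) : (Fin m → ℝ) × ℝ) + (1-u) • ((y'', s') : (Fin m → ℝ) × ℝ)
          = (y₀ + (1-u) • (y'' - y₀), s) := by
        have hc1 : u • y₀ + (1-u) • y'' = y₀ + (1-u) • (y'' - y₀) := by module
        have hc2 : u * (c₀ + (s-a)/u) + (1-u) * s' = s := by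
          rw [mul_add, mul_div_cancel₀ _ hu', ha]
          ring
        calc u • ((y₀, c₀ + (s-a)/u) : (Fin m → ℝ) × ℝ) + (1-u) • ((y'', s') : (Fin m → ℝ) × ℝ)
            = (u • y₀ + (1-u) • y'', u * (c₀ + (s-a)/u) + (1-u) * s') := rfl
          _ = (y₀ + (1-u) • (y'' - y₀), s) := by rw [hc1, hc2]
      rw [Set.mem_preimage]
      rw [← heq]
      exact hcomb
    calc ENNReal.ofReal (u*d) = volume (Set.Icc a (a + u*d)) := by
          rw [Real.volume_Icc]
          congr 1
          ring
      _ ≤ f _ := measure_mono hsub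
  have hstep : ∀ N : ℕ, 1 ≤ N →
      d * v * ((N:ℝ)-1)^(m+1) / (((m:ℝ)+1) * (N:ℝ)^(m+1)) ≤ (volume KP).toReal := by
    intro N hN
    have hNpos : (0:ℝ) < N := by exact_mod_cast hN
    set b : ℕ → ℝ := fun k => (1 - (k:ℝ)/N)^m with hb
    set S : ℕ → Set (Fin m → ℝ) := fun k => Q ((k:ℝ)/N) \ Q (((k:ℝ)+1)/N) with hS
    have hrange : ∀ k : ℕ, k ∈ Finset.range N →
        (0:ℝ) ≤ (k:ℝ)/N ∧ ((k:ℝ)+1)/N ≤ 1 ∧ (k:ℝ)/N ≤ ((k:ℝ)+1)/N := by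
      intro k hk
      rw [Finset.mem_range] at hk
      refine ⟨by positivity, ?_, by gcongr <;> linarith⟩
      rw [div_le_one hNpos]
      have : (k:ℝ)+1 ≤ N := by exact_mod_cast Nat.succ_le_of_lt hk
      linarith
    have hSm : ∀ k : ℕ, MeasurableSet (S k) :=
      fun k => (hQcomp _).measurableSet.diff (hQcomp _).measurableSet
    have hdisj : (↑(Finset.range N) : Set ℕ).PairwiseDisjoint S := by
      have key : ∀ a' b' : ℕ, a' < b' → b' < N → Disjoint (S a') (S b') := by
        intro a' b' hab hbN
        rw [Set.disjoint_left]
        rintro x ⟨_, hx2⟩ ⟨hx3, _⟩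
        apply hx2
        have hsub2 : Q ((b':ℝ)/N) ⊆ Q (((a':ℝ)+1)/N) := by
          apply hQsub
          · positivity
          · have : ((a':ℝ)+1) ≤ (b':ℝ) := by exact_mod_cast hab
            gcongr
          · rw [div_le_one hNpos]
            exact_mod_cast hbN.le
        exact hsub2 hx3
      intro a' ha b' hb hab
      rcases lt_or_gt_of_ne hab with h|h
      · exact key a' b' h (by simpa using hb)
      · exact (key b' a' h (by simpa using ha)).symm
    have hle1 : ∑ k ∈ Finset.range N, ENNReal.ofReal ((k:ℝ)/N * d) * volume (S k)
        ≤ volume KP := by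
      rw [hfub]
      calc ∑ k ∈ Finset.range N, ENNReal.ofReal ((k:ℝ)/N*d) * volume (S k)
          = ∑ k ∈ Finset.range N, ∫⁻ _ in S k, ENNReal.ofReal ((k:ℝ)/N*d) := by
            refine Finset.sum_congr rfl fun k _ => ?_
            rw [setLIntegral_const]
        _ ≤ ∑ k ∈ Finset.range N, ∫⁻ y in S k, f y := by
            refine Finset.sum_le_sum fun k hk => ?_
            refine setLIntegral_mono hfmeas fun y hy => ?_
            obtain ⟨h1, h2, h3⟩ := hrange k hk
            exact hfQ ((k:ℝ)/N) h1 (le_trans h3 h2) y hy.1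
        _ = ∫⁻ y in ⋃ k ∈ Finset.range N, S k, f y :=
            (lintegral_biUnion_finset hdisj (fun k _ => hSm k) f).symm
        _ ≤ ∫⁻ y, f y := setLIntegral_le_lintegral _ _
    have hSvol : ∀ k ∈ Finset.range N, volume (S k) = ENNReal.ofReal ((b k - b (k+1)) * v) := by
      intro k hk
      obtain ⟨h1, h2, h3⟩ := hrange k hk
      show volume (Q ((k:ℝ)/N) \ Q (((k:ℝ)+1)/N)) = _
      rw [measure_diff (hQsub _ _ h1 h3 h2) (hQcomp _).measurableSet.nullMeasurableSet
        (hQcomp _).measure_lt_top.ne]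
      rw [hQvol _ h1 (le_trans h3 h2), hQvol _ (le_trans h1 h3) h2]
      have hnn : (0:ℝ) ≤ 1 - ((k:ℝ)+1)/N := by linarith
      rw [← ENNReal.ofReal_sub _ (mul_nonneg (pow_nonneg hnn _) hv0)]
      congr 1
      rw [hb]
      push_cast
      ring
    have hsum : ∑ k ∈ Finset.range N, ENNReal.ofReal ((k:ℝ)/N*d) * volume (S k)
        = ENNReal.ofReal (∑ k ∈ Finset.range N, ((k:ℝ)/N*d) * ((b k - b (k+1)) * v)) := by
      have hbmono : ∀ k ∈ Finset.range N, 0 ≤ (b k - b (k+1)) := by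
        intro k hk
        obtain ⟨h1, h2, h3⟩ := hrange k hk
        have hnn : (0:ℝ) ≤ 1 - ((k:ℝ)+1)/N := by linarith
        have := pow_le_pow_left₀ hnn (by linarith : 1 - ((k:ℝ)+1)/N ≤ 1 - (k:ℝ)/N) m
        rw [hb]
        push_cast
        linarith [this]
      rw [ENNReal.ofReal_sum_of_nonneg]
      · refine Finset.sum_congr rfl fun k hk => ?_
        rw [hSvol k hk, ← ENNReal.ofReal_mul (by positivity)]
      · intro k hk
        have h2 := hbmono k hk
        have h1 : (0:ℝ) ≤ (k:ℝ)/N*d := by positivity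
        exact mul_nonneg h1 (mul_nonneg h2 hv0)
    have hbN : b N = 0 := by
      rw [hb]
      simp only [div_self hNpos.ne', sub_self]
      exact zero_pow (by omega : m ≠ 0)
    have hreal : (∑ k ∈ Finset.range N, ((k:ℝ)/N*d) * ((b k - b (k+1)) * v))
        = d*v/N * (∑ k ∈ Finset.range N, b (k+1)) := by
      have h5 : ∀ k : ℕ, ((k:ℝ)/N*d) * ((b k - b (k+1)) * v)
          = (d*v/N) * ((k:ℝ) * (b k - b (k+1))) := by
        intro k
        field_simp
      rw [Finset.sum_congr rfl (fun k _ => h5 k), ← Finset.mul_sum, abel_id b N, hbN]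
      ring
    have hrefl : (∑ k ∈ Finset.range N, b (k+1)) = ∑ j ∈ Finset.range N, ((j:ℝ)/N)^m := by
      rw [← Finset.sum_range_reflect (fun k => b (k+1)) N]
      refine Finset.sum_congr rfl fun j hj => ?_
      rw [Finset.mem_range] at hj
      have h1 : N - 1 - j + 1 = N - j := by omega
      show b (N - 1 - j + 1) = _
      rw [h1, hb]
      have h2 : ((N - j : ℕ):ℝ) = (N:ℝ) - j := by
        rw [Nat.cast_sub hj.le]
      show (1 - ((N - j : ℕ):ℝ)/N)^m = ((j:ℝ)/N)^m
      rw [h2]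
      congr 1
      field_simp
      ring
    have hpow : ((N:ℝ)-1)^(m+1)/(((m:ℝ)+1) * (N:ℝ)^m) ≤ ∑ j ∈ Finset.range N, ((j:ℝ)/N)^m := by
      have h1 : (∑ j ∈ Finset.range N, ((j:ℝ)/N)^m) = (∑ j ∈ Finset.range N, (j:ℝ)^m)/(N:ℝ)^m := by
        rw [Finset.sum_div]
        refine Finset.sum_congr rfl fun j _ => ?_
        rw [div_pow]
      rw [h1]
      have h2 := sum_pow_lb m (N-1)
      have h3 : N - 1 + 1 = N := by omega
      rw [h3] at h2
      have h4 : ((N-1:ℕ):ℝ) = (N:ℝ)-1 := by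
        rw [Nat.cast_sub hN]
        norm_num
      rw [h4] at h2
      calc ((N:ℝ)-1)^(m+1)/(((m:ℝ)+1) * (N:ℝ)^m)
          = (((N:ℝ)-1)^(m+1)/((m:ℝ)+1))/(N:ℝ)^m := by
            rw [div_div]
        _ ≤ (∑ j ∈ Finset.range N, (j:ℝ)^m)/(N:ℝ)^m := by
            gcongr
    have hofreal := hle1
    rw [hsum] at hofreal
    have hofreal2 := (ENNReal.ofReal_le_iff_le_toReal hKfin).mp hofreal
    refine le_trans ?_ hofreal2
    rw [hreal, hrefl]
    calc d * v * ((N:ℝ)-1)^(m+1) / (((m:ℝ)+1) * (N:ℝ)^(m+1))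
        = d*v/N * (((N:ℝ)-1)^(m+1)/(((m:ℝ)+1) * (N:ℝ)^m)) := by
          have hN0 : (N:ℝ) ≠ 0 := hNpos.ne'
          have hm0 : ((m:ℝ)+1) ≠ 0 := by positivity
          rw [pow_succ]
          field_simp
          ring_nf
      _ ≤ d*v/N * (∑ j ∈ Finset.range N, ((j:ℝ)/N)^m) := by
          apply mul_le_mul_of_nonneg_left hpow (by positivity)
  rw [ENNReal.ofReal_le_iff_le_toReal hKfin]
  have htend : Filter.Tendsto (fun N : ℕ => d * v * (((N:ℝ)-1)/(N:ℝ))^(m+1) / ((m:ℝ)+1))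
      Filter.atTop (nhds (d * v / ((m:ℝ)+1))) := by
    have h1 : Filter.Tendsto (fun N : ℕ => ((N:ℝ)-1)/(N:ℝ)) Filter.atTop (nhds 1) := by
      have h2 : Filter.Tendsto (fun N : ℕ => 1 - ((N:ℝ))⁻¹) Filter.atTop (nhds (1 - 0)) :=
        Filter.Tendsto.const_sub _ tendsto_inv_atTop_nhds_zero_nat
      rw [sub_zero] at h2
      apply h2.congr'
      filter_upwards [Filter.eventually_ge_atTop 1] with N hN
      have hN0 : (N:ℝ) ≠ 0 := by
        have : (0:ℝ) < N := by exact_mod_cast hN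
        exact this.ne'
      field_simp
    have h3 := ((h1.pow (m+1)).const_mul (d*v)).div_const ((m:ℝ)+1)
    simpa using h3
  apply le_of_tendsto htend
  filter_upwards [Filter.eventually_ge_atTop 1] with N hN
  have hst := hstep N hN
  calc d * v * (((N:ℝ)-1)/(N:ℝ))^(m+1) / ((m:ℝ)+1)
      = d * v * ((N:ℝ)-1)^(m+1) / (((m:ℝ)+1) * (N:ℝ)^(m+1)) := by
        rw [div_pow]
        have hN0 : (N:ℝ) ≠ 0 := by
          have : (0:ℝ) < N := by exact_mod_cast hN
          exact this.ne'
        field_simp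
    _ ≤ (volume KP).toReal := hst

def TL (m : ℕ) : Em (m+1) →ₗ[ℝ] ((Fin m → ℝ) × ℝ) where
  toFun x := (fun i => x i.castSucc, x (Fin.last m))
  map_add' := fun _ _ => rfl
  map_smul' := fun _ _ => rfl

lemma Tm_eq_TL : ⇑(Tm m) = ⇑(TL m) := funext fun x => Tm_apply x

lemma fst_image_Tm {K : Set (Em (m+1))} :
    Prod.fst '' (Tm m '' K)
      = ((MeasurableEquiv.toLp 2 (Fin m → ℝ)).symm).symm ⁻¹' (proj '' K) := by
  ext y
  constructor
  · rintro ⟨z, ⟨w, hw, rfl⟩, rfl⟩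
    show ((MeasurableEquiv.toLp 2 (Fin m → ℝ)).symm).symm ((Tm m w).1) ∈ proj '' K
    rw [Tm_apply, measEquiv_symm_apply]
    exact ⟨w, hw, rfl⟩
  · intro hy
    have hy' : ((MeasurableEquiv.toLp 2 (Fin m → ℝ)).symm).symm y ∈ proj '' K := hy
    rw [measEquiv_symm_apply] at hy'
    obtain ⟨w, hw, hww⟩ := hy'
    refine ⟨Tm m w, ⟨w, hw, rfl⟩, ?_⟩
    rw [Tm_apply]
    exact congrArg WithLp.ofLp hww

lemma vol_lower_bound (hm : 1 ≤ m) {K : Set (Em (m+1))} (hK : IsConvexBody K)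
    {d : ℝ} (hd : 0 < d) {x : Em (m+1)} (hx : x ∈ K) (hx2 : x + lift 0 d ∈ K) :
    ENNReal.ofReal (d * (volume (proj '' K)).toReal / ((m:ℝ)+1)) ≤ volume K := by
  set KP := Tm m '' K with hKP
  have hKPm : MeasurableSet KP := ((Tm m).measurableSet_image).mpr hK.1.measurableSet
  have hKPconv : Convex ℝ KP := by
    rw [hKP, Tm_eq_TL]
    exact hK.2.1.linear_image (TL m)
  have hKPcomp : IsCompact KP := by
    rw [hKP, Tm_eq_TL]
    exact hK.1.image (TL m).continuous_of_finiteDimensional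
  have hch : ∀ τ ∈ Set.Icc (0:ℝ) d,
      ((fun i => x i.castSucc : Fin m → ℝ), x (Fin.last m) + τ) ∈ KP := by
    intro τ hτ
    have hz := chord_mem hK.2.1 hd hx hx2 hτ
    refine ⟨x + lift 0 τ, hz, ?_⟩
    rw [Tm_apply]
    simp only [Prod.mk.injEq]
    constructor
    · funext i
      show x i.castSucc + lift (0 : Em m) τ i.castSucc = x i.castSucc
      rw [lift_castSucc]
      simp
    · show x (Fin.last m) + lift (0 : Em m) τ (Fin.last m) = x (Fin.last m) + τ
      rw [lift_last]
  have hvol : volume K = volume KP := by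
    have h := Tm_pres.measure_preimage (s := KP) hKPm.nullMeasurableSet
    rwa [hKP, Set.preimage_image_eq K (Tm m).injective] at h
  have hPvol : volume (Prod.fst '' KP) = volume (proj '' K) := by
    rw [hKP, fst_image_Tm, volume_transfer (hK.1.image proj_continuous).measurableSet]
  have hpb := prism_bound hm hKPconv hKPcomp hd hch
  rw [hPvol] at hpb
  rw [hvol]
  exact hpb

lemma main_vol_bound (hm : 1 ≤ m) {L : Set (Em m)} {K : Set (Em (m+1))}
    (hLb : Bornology.IsBounded L) (hL0 : (0 : Em m) ∈ L) (hK : IsConvexBody K) :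
    (xi (prodSeg L) K / 2) * (volume (proj '' K)).toReal / ((m:ℝ)+1)
      ≤ (volume K).toReal := by
  set ξ := xi (prodSeg L) K with hξ
  set vp := (volume (proj '' K)).toReal with hvp
  set V := (volume K).toReal with hV
  have hvp0 : 0 ≤ vp := ENNReal.toReal_nonneg
  have hV0 : 0 ≤ V := ENNReal.toReal_nonneg
  have hKfin : volume K ≠ ⊤ := hK.1.measure_lt_top.ne
  rcases le_or_gt ξ 0 with hξ0 | hξ0
  · have : ξ/2 * vp ≤ 0 := mul_nonpos_of_nonpos_of_nonneg (by linarith) hvp0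
    have h2 : ξ/2 * vp / ((m:ℝ)+1) ≤ 0 := div_nonpos_of_nonpos_of_nonneg this (by positivity)
    linarith
  rcases eq_or_lt_of_le hvp0 with hvp0' | hvp0'
  · rw [← hvp0', mul_zero, zero_div]
    exact hV0
  -- key: for every 0 < d < ξ/2 we get d * vp / (m+1) ≤ V
  have hkey : ∀ d : ℝ, 0 < d → 2 * d < ξ → d * vp / ((m:ℝ)+1) ≤ V := by
    intro d hd hdξ
    obtain ⟨x, hx, hx2⟩ := exists_chord hLb hL0 hd hdξ
    have := vol_lower_bound hm hK hd hx hx2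
    exact (ENNReal.ofReal_le_iff_le_toReal hKfin).mp this
  by_contra hcon
  push_neg at hcon
  set T := ξ/2 * vp / ((m:ℝ)+1) with hT
  have hT0 : 0 < T := by
    apply div_pos (mul_pos (by linarith) hvp0') (by positivity)
  set ε := (T - V) * ((m:ℝ)+1) / vp / 2 with hε
  have hε0 : 0 < ε := by
    apply div_pos (div_pos (mul_pos (by linarith) (by positivity)) hvp0')
    norm_num
  have hvpne : vp ≠ 0 := hvp0'.ne'
  have hm1 : ((m:ℝ)+1) ≠ 0 := by positivity
  have hεlt : ε < ξ/2 := by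
    have h1 : T - V ≤ T := by linarith
    have h2 : ε ≤ T * ((m:ℝ)+1) / vp / 2 := by
      rw [hε]
      gcongr
    have h3 : T * ((m:ℝ)+1) / vp / 2 = ξ/4 := by
      rw [hT]
      field_simp
      ring
    rw [h3] at h2
    linarith
  have hd : 0 < ξ/2 - ε := by linarith
  have hdξ : 2 * (ξ/2 - ε) < ξ := by linarith
  have := hkey _ hd hdξ
  have hstep2 : ε * vp / ((m:ℝ)+1) = (T - V)/2 := by
    rw [hε]
    field_simp
  have hcontr : (ξ/2 - ε) * vp / ((m:ℝ)+1) = T - (T - V)/2 := by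
    rw [sub_mul, sub_div, hstep2, ← hT]
  rw [hcontr] at this
  linarith

lemma volume_prodSeg_toReal {L : Set (Em m)} (hL : IsCompact L) :
    (volume (prodSeg L)).toReal = 2 * (volume L).toReal := by
  rw [volume_prodSeg_eq hL, ENNReal.toReal_mul]
  norm_num

end VAS
end

/-- if Viterbo's conjecture holds for all Lagrangian products `M × L` in
dimension `n - 1 = m`, then it holds for `K × (L × [-1,1])` in dimension `n = m + 1`. -/
theorem viterbo_add_segment (m : ℕ) (hm : 1 ≤ m)
    (L : Set (EuclideanSpace ℝ (Fin m))) (hL : IsConvexBody L)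
    (h0 : (0 : EuclideanSpace ℝ (Fin m)) ∈ interior L)
    (hind : ∀ M : Set (EuclideanSpace ℝ (Fin m)), IsConvexBody M →
      (volume M).toReal * (volume L).toReal ≥ xi L M ^ m / m.factorial)
    (K : Set (EuclideanSpace ℝ (Fin (m + 1)))) (hK : IsConvexBody K) :
    (volume K).toReal * (volume (prodSeg L)).toReal
      ≥ xi (prodSeg L) K ^ (m + 1) / (m + 1).factorial := by
  have hLb := hL.1.isBounded
  have hL0 : (0 : EuclideanSpace ℝ (Fin m)) ∈ L := interior_subset h0
  have hξ0 : 0 ≤ xi (prodSeg L) K :=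
    VAS.xi_nonneg (VAS.isBounded_prodSeg hLb) (VAS.zero_mem_prodSeg hL0)
  have hPbody : IsConvexBody (VAS.proj '' K) := VAS.isConvexBody_proj hK
  have hξP : xi (prodSeg L) K ≤ xi L (VAS.proj '' K) :=
    VAS.xi_le_xi_proj hm hLb hL0 hPbody.1.isBounded
  have hind' := hind (VAS.proj '' K) hPbody
  have hmain := VAS.main_vol_bound hm hLb hL0 hK
  rw [VAS.volume_prodSeg_toReal hL.1]
  have hvL0 : (0:ℝ) ≤ (volume L).toReal := ENNReal.toReal_nonneg
  have hvP0 : (0:ℝ) ≤ (volume (VAS.proj '' K)).toReal := ENNReal.toReal_nonneg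
  have hpow : xi (prodSeg L) K ^ m ≤ xi L (VAS.proj '' K) ^ m :=
    pow_le_pow_left₀ hξ0 hξP m
  have hfacpos : (0:ℝ) < (m.factorial : ℝ) := by exact_mod_cast m.factorial_pos
  have hfac : (((m+1).factorial : ℕ) : ℝ) = ((m:ℝ)+1) * (m.factorial : ℝ) := by
    rw [Nat.factorial_succ]
    push_cast
    ring
  rw [ge_iff_le, hfac]
  have h2 : xi (prodSeg L) K ^ m / (m.factorial : ℝ)
      ≤ (volume (VAS.proj '' K)).toReal * (volume L).toReal := by
    refine le_trans ?_ hind'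
    gcongr
  calc xi (prodSeg L) K ^ (m+1) / (((m:ℝ)+1) * (m.factorial : ℝ))
      = (xi (prodSeg L) K / ((m:ℝ)+1)) * (xi (prodSeg L) K ^ m / (m.factorial : ℝ)) := by
        have hne1 : ((m:ℝ)+1) ≠ 0 := by positivity
        have hne2 : (m.factorial : ℝ) ≠ 0 := hfacpos.ne'
        rw [pow_succ]
        field_simp
    _ ≤ (xi (prodSeg L) K / ((m:ℝ)+1)) *
          ((volume (VAS.proj '' K)).toReal * (volume L).toReal) := by
        apply mul_le_mul_of_nonneg_left h2 (by positivity)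
    _ = ((xi (prodSeg L) K / 2) * (volume (VAS.proj '' K)).toReal / ((m:ℝ)+1))
          * (2 * (volume L).toReal) := by
        ring
    _ ≤ (volume K).toReal * (2 * (volume L).toReal) := by
        apply mul_le_mul_of_nonneg_right hmain (by positivity)
end

section
/- Let S = conv{v₀,…,vₙ} ⊂ ℝⁿ be an n-simplex with 0 ∈ int S. Then for every q ∈ ℝⁿ there exist an index i ∈ {0,…,n} and coefficients α₀,…,αₙ ≥ 0 with αᵢ = 0 such that q = Σₖ αₖ vₖ and ‖q‖_{S°} = Σₖ αₖ, where S° = {p : ⟨p,x⟩ ≤ 1 ∀x ∈ S} and ‖q‖_{S°} = max_{p∈S°} ⟨p,q⟩ (the gauge function of S). In other words, the gauge of S is linear on each of the cones Cᵢ = cone({v₀,…,vₙ} \ {vᵢ}), and these cones cover ℝⁿ. -/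
open scoped BigOperators Pointwise RealInnerProductSpace
open MeasureTheory

/-- the gauge `‖·‖_{S°}` of a simplex `S = conv{v₀,…,vₙ}` with `0 ∈ int S`
is linear on each cone `Cᵢ = cone({v₀,…,vₙ} \ {vᵢ})`, and these cones cover `ℝⁿ`:
every `q` is a nonnegative combination of the `vₖ` with some `αᵢ = 0` and
`‖q‖_{S°} = Σₖ αₖ`. -/
theorem gauge_linear_on_cones (n : ℕ) (hn : 1 ≤ n)
    (v : Fin (n + 1) → EuclideanSpace ℝ (Fin n)) (hv : AffineIndependent ℝ v)
    (h0 : (0 : EuclideanSpace ℝ (Fin n)) ∈ interior (convexHull ℝ (Set.range v)))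
    (q : EuclideanSpace ℝ (Fin n)) :
    ∃ i : Fin (n + 1), ∃ α : Fin (n + 1) → ℝ, (∀ k, 0 ≤ α k) ∧ α i = 0 ∧
      q = ∑ k, α k • v k ∧
      suppNorm (polarSet (convexHull ℝ (Set.range v))) q = ∑ k, α k := by
  classical
  have htop : affineSpan ℝ (Set.range v) = ⊤ := by
    rw [← interior_convexHull_nonempty_iff_affineSpan_eq_top]
    exact ⟨0, h0⟩
  let b : AffineBasis (Fin (n + 1)) ℝ (EuclideanSpace ℝ (Fin n)) := ⟨v, hv, htop⟩
  have hb : ∀ k, b k = v k := fun k => rfl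
  set lam : Fin (n + 1) → ℝ := fun k => b.coord k 0 with hlam
  have hlampos : ∀ k, 0 < lam k := by
    have h0' : (0 : EuclideanSpace ℝ (Fin n)) ∈ interior (convexHull ℝ (Set.range b)) := h0
    rw [b.interior_convexHull] at h0'
    exact fun k => h0' k
  have hlamsum : ∑ k, lam k = 1 := b.sum_coord_apply_eq_one 0
  have hlamrep : ∑ k, lam k • v k = 0 := b.linear_combination_coord_eq_self 0
  set beta : Fin (n + 1) → ℝ := fun k => b.coord k q with hbeta
  have hbetasum : ∑ k, beta k = 1 := b.sum_coord_apply_eq_one q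
  have hbetarep : ∑ k, beta k • v k = q := b.linear_combination_coord_eq_self q
  obtain ⟨i, -, hi⟩ := Finset.exists_min_image Finset.univ
    (fun k => beta k / lam k) ⟨0, Finset.mem_univ 0⟩
  set t : ℝ := beta i / lam i with ht
  set α : Fin (n + 1) → ℝ := fun k => beta k - t * lam k with hα
  have hαnn : ∀ k, 0 ≤ α k := by
    intro k
    have h1 : beta i / lam i ≤ beta k / lam k := hi k (Finset.mem_univ k)
    rw [div_le_div_iff₀ (hlampos i) (hlampos k)] at h1
    have h2 : t * lam k ≤ beta k := by
      rw [ht, div_mul_eq_mul_div, div_le_iff₀ (hlampos i)]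
      exact h1
    simpa [hα] using sub_nonneg.mpr h2
  have hαi : α i = 0 := by
    simp only [hα, ht, div_mul_cancel₀ _ (ne_of_gt (hlampos i)), sub_self]
  have hαrep : q = ∑ k, α k • v k := by
    have h3 : ∑ k, α k • v k = (∑ k, beta k • v k) - t • ∑ k, lam k • v k := by
      rw [Finset.smul_sum, ← Finset.sum_sub_distrib]
      refine Finset.sum_congr rfl fun k _ => ?_
      simp [hα, sub_smul, mul_smul]
    rw [h3, hbetarep, hlamrep, smul_zero, sub_zero]
  have hαsum : ∑ k, α k = 1 - t := by
    simp only [hα]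
    rw [Finset.sum_sub_distrib, hbetasum, ← Finset.mul_sum, hlamsum, mul_one]
  refine ⟨i, α, hαnn, hαi, hαrep, ?_⟩
  set L : EuclideanSpace ℝ (Fin n) →ₗ[ℝ] ℝ := (-(lam i)⁻¹) • (b.coord i).linear with hL
  set p : EuclideanSpace ℝ (Fin n) :=
    (InnerProductSpace.toDual ℝ (EuclideanSpace ℝ (Fin n))).symm
      (LinearMap.toContinuousLinearMap L) with hp
  have hpx : ∀ x : EuclideanSpace ℝ (Fin n), ⟪p, x⟫ = (lam i - b.coord i x) / lam i := by
    intro x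
    have hlin : (b.coord i).linear x = b.coord i x - b.coord i 0 := by
      have h4 := (b.coord i).map_vadd 0 x
      simp only [vadd_eq_add, add_zero] at h4
      rw [h4]; ring
    rw [hp, InnerProductSpace.toDual_symm_apply]
    simp only [LinearMap.coe_toContinuousLinearMap', hL, LinearMap.smul_apply, hlin,
      smul_eq_mul]
    have hne : lam i ≠ 0 := ne_of_gt (hlampos i)
    field_simp
    simp only [hlam]; ring
  have hpv : ∀ k, ⟪p, v k⟫ ≤ 1 := by
    intro k
    rw [hpx, ← hb, b.coord_apply, div_le_one (hlampos i)]
    rcases eq_or_ne i k with h | h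
    · simp only [if_pos h]; linarith
    · simp only [if_neg h]; linarith
  have hpvne : ∀ k, k ≠ i → ⟪p, v k⟫ = 1 := by
    intro k hk
    rw [hpx, ← hb, b.coord_apply]
    simp [Ne.symm hk, div_self (ne_of_gt (hlampos i))]
  have hppolar : p ∈ polarSet (convexHull ℝ (Set.range v)) := by
    intro x hx
    have hsub : convexHull ℝ (Set.range v) ⊆ {x : EuclideanSpace ℝ (Fin n) | ⟪p, x⟫ ≤ 1} := by
      apply convexHull_min
      · rintro _ ⟨k, rfl⟩; exact hpv k
      · exact convex_halfSpace_le ⟨fun a c => inner_add_right _ _ _,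
          fun c a => real_inner_smul_right _ _ _⟩ 1
    exact hsub hx
  have hpq : ⟪p, q⟫ = ∑ k, α k := by
    rw [hαrep, inner_sum]
    refine Finset.sum_congr rfl fun k _ => ?_
    rw [real_inner_smul_right]
    rcases eq_or_ne k i with h | h
    · simp [h, hαi]
    · rw [hpvne k h, mul_one]
  have hgreat : IsGreatest ((fun p : EuclideanSpace ℝ (Fin n) => ⟪p, q⟫) ''
      polarSet (convexHull ℝ (Set.range v))) (∑ k, α k) := by
    constructor
    · exact ⟨p, hppolar, hpq⟩
    · rintro r ⟨w, hw, rfl⟩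
      show (inner ℝ w q : ℝ) ≤ ∑ k, α k
      rw [hαrep, inner_sum]
      apply Finset.sum_le_sum
      intro k _
      rw [real_inner_smul_right]
      have hvk : v k ∈ convexHull ℝ (Set.range v) :=
        subset_convexHull ℝ _ ⟨k, rfl⟩
      have h5 := hw (v k) hvk
      nlinarith [hαnn k]
  unfold suppNorm
  exact hgreat.csSup_eq
end
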